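/- arXiv:2103.07047 — 5 statements merged into one kernel-verified Lean document; each statement's English description precedes it below -/
import Mathlib

section
/- A tournament T on n vertices maximizes the number of induced cyclic triangles among all n-vertex tournaments if and only if every vertex of T has out-degree in the set {(n-2)/2, (n-1)/2, n/2} (interpreted as integers, i.e., out-degree ⌊(n-1)/2⌋ or ⌈(n-1)/2⌉). -/
open Finset
open scoped Classical

section Defs

variable {V : Type*}

/-- A tournament: irreflexive, and exactly one arc between any two distinct vertices. -/
def IsTournament (r : V → V → Prop) : Prop :=
  (∀ v, ¬ r v v) ∧ ∀ u v : V, u ≠ v → (r u v ↔ ¬ r v u)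

/-- Out-degree of a vertex. -/
noncomputable def outDeg [Fintype V] (r : V → V → Prop) (v : V) : ℕ :=
  (Finset.univ.filter (fun w => r v w)).card

/-- `s` induces a cyclic triangle `C₃`. -/
def IsC3 (r : V → V → Prop) (s : Finset V) : Prop :=
  ∃ a b c : V, s = {a, b, c} ∧ r a b ∧ r b c ∧ r c a

/-- `s` induces a transitive triangle `TT₃`. -/
def IsTT3 (r : V → V → Prop) (s : Finset V) : Prop :=
  ∃ a b c : V, a ≠ b ∧ a ≠ c ∧ b ≠ c ∧ s = {a, b, c} ∧ r a b ∧ r a c ∧ r b c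

/-- `s` induces a transitive tournament on 4 vertices `TT₄`. -/
def IsTT4 (r : V → V → Prop) (s : Finset V) : Prop :=
  ∃ a b c d : V, a ≠ b ∧ a ≠ c ∧ a ≠ d ∧ b ≠ c ∧ b ≠ d ∧ c ≠ d ∧
    s = {a, b, c, d} ∧ r a b ∧ r a c ∧ r a d ∧ r b c ∧ r b d ∧ r c d

/-- `s` induces `C₃⁺`: a directed 3-cycle plus a source vertex dominating it. -/
def IsC3plus (r : V → V → Prop) (s : Finset V) : Prop :=
  ∃ v a b c : V, v ≠ a ∧ v ≠ b ∧ v ≠ c ∧ s = {v, a, b, c} ∧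
    r v a ∧ r v b ∧ r v c ∧ r a b ∧ r b c ∧ r c a

/-- `s` induces `C₃⁻`: a directed 3-cycle plus a sink vertex dominated by it. -/
def IsC3minus (r : V → V → Prop) (s : Finset V) : Prop :=
  ∃ v a b c : V, v ≠ a ∧ v ≠ b ∧ v ≠ c ∧ s = {v, a, b, c} ∧
    r a v ∧ r b v ∧ r c v ∧ r a b ∧ r b c ∧ r c a

/-- `s` induces `C₄`, the strongly connected 4-vertex tournament. -/
def IsC4 (r : V → V → Prop) (s : Finset V) : Prop :=
  ∃ a b c d : V, a ≠ b ∧ a ≠ c ∧ a ≠ d ∧ b ≠ c ∧ b ≠ d ∧ c ≠ d ∧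
    s = {a, b, c, d} ∧ r a b ∧ r a c ∧ r d a ∧ r b c ∧ r b d ∧ r c d

/-- Number of `k`-subsets of `A` satisfying `P`. -/
noncomputable def numCopiesIn (P : Finset V → Prop) (A : Finset V) (k : ℕ) : ℕ :=
  ((A.powersetCard k).filter P).card

/-- Number of `k`-subsets of the whole vertex set satisfying `P`. -/
noncomputable def numCopies [Fintype V] (P : Finset V → Prop) (k : ℕ) : ℕ :=
  numCopiesIn P Finset.univ k

end Defs

/-- Membership in the class `𝒞_n` of carousels, up to relabeling of the vertices. -/
def IsCarousel (n : ℕ) (r : Fin n → Fin n → Prop) : Prop :=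
  ∃ e : Fin n ≃ Fin n, ∀ i j : Fin n,
    ((0 < (j : ℤ) - (i : ℤ) ∧ 2 * ((j : ℤ) - (i : ℤ)) < (n : ℤ)) ∨
      (n : ℤ) < 2 * ((i : ℤ) - (j : ℤ))) →
    r (e i) (e j)

section CountA
variable {n : ℕ} (r : Fin n → Fin n → Prop)

noncomputable def Sblock (v : Fin n) : Finset (Finset (Fin n)) :=
  ((Finset.univ.filter (fun w => r v w)).powersetCard 2).image (insert v)

lemma mem_Sblock_iff (v : Fin n) (s : Finset (Fin n)) :
    s ∈ Sblock r v ↔ ∃ p : Finset (Fin n), p ⊆ Finset.univ.filter (fun w => r v w) ∧ p.card = 2 ∧ s = insert v p := by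
  simp only [Sblock, Finset.mem_image, Finset.mem_powersetCard]
  constructor
  · rintro ⟨p, ⟨h1, h2⟩, h3⟩; exact ⟨p, h1, h2, h3.symm⟩
  · rintro ⟨p, h1, h2, h3⟩; exact ⟨p, ⟨h1, h2⟩, h3.symm⟩

lemma helper_mem {v x y : Fin n} (hxy : x ≠ y) (h1 : r v x) (h2 : r v y)
    (s : Finset (Fin n)) (hs : ∀ z, z ∈ s ↔ z = v ∨ z = x ∨ z = y) : s ∈ Sblock r v := by
  rw [mem_Sblock_iff r]
  refine ⟨{x, y}, ?_, ?_, ?_⟩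
  · intro z hz
    simp only [Finset.mem_insert, Finset.mem_singleton] at hz
    rcases hz with h | h <;> subst h <;> simp [h1, h2]
  · rw [Finset.card_insert_of_notMem (by simp [hxy]), Finset.card_singleton]
  · ext z; simp [hs z]

lemma countA (hT : IsTournament r) :
    numCopies (IsC3 r) 3 + ∑ v : Fin n, (outDeg r v).choose 2 = n.choose 3 := by
  classical
  have hne : ∀ {a b : Fin n}, r a b → a ≠ b := by
    rintro a b h rfl; exact hT.1 a h
  have hdisj : ∀ v ∈ (Finset.univ : Finset (Fin n)), ∀ u ∈ (Finset.univ : Finset (Fin n)),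
      v ≠ u → Disjoint (Sblock r v) (Sblock r u) := by
    intro v _ u _ hvu
    rw [Finset.disjoint_left]
    intro s hsv hsu
    rw [mem_Sblock_iff r] at hsv hsu
    obtain ⟨p, hp1, hp2, rfl⟩ := hsv
    obtain ⟨q, hq1, hq2, hq⟩ := hsu
    have hvq : v ∈ insert u q := by rw [← hq]; exact Finset.mem_insert_self v p
    have huq : u ∈ insert v p := by rw [hq]; exact Finset.mem_insert_self u q
    have h1 : r v u := by
      rcases Finset.mem_insert.mp huq with h | h
      · exact absurd h.symm hvu
      · simpa using hp1 h
    have h2 : r u v := by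
      rcases Finset.mem_insert.mp hvq with h | h
      · exact absurd h hvu
      · simpa using hq1 h
    exact (hT.2 v u hvu).mp h1 h2
  have hset : (Finset.univ.powersetCard 3).filter (fun s => ¬ IsC3 r s)
      = Finset.univ.biUnion (Sblock r) := by
    ext s
    simp only [Finset.mem_filter, Finset.mem_powersetCard, Finset.mem_biUnion, Finset.mem_univ,
      true_and]
    constructor
    · rintro ⟨⟨-, hcard⟩, hnc3⟩
      obtain ⟨a, b, c, hab, hac, hbc, hs⟩ := Finset.card_eq_three.mp hcard
      have hmem : ∀ z, z ∈ s ↔ z = a ∨ z = b ∨ z = c := by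
        intro z; rw [hs]; simp
      have orr : ∀ x y : Fin n, x ≠ y → r x y ∨ r y x := by
        intro x y hxy
        by_cases h : r x y
        · exact Or.inl h
        · exact Or.inr ((hT.2 y x hxy.symm).mpr h)
      have hc3 : ∀ x y z : Fin n, (∀ w, w ∈ s ↔ w = x ∨ w = y ∨ w = z) →
          r x y → r y z → r z x → False := by
        intro x y z hw h1 h2 h3
        exact hnc3 ⟨x, y, z, by ext w; rw [hw w]; simp, h1, h2, h3⟩
      have hmem1 : ∀ z, z ∈ s ↔ z = b ∨ z = a ∨ z = c := by intro z; rw [hmem z]; tauto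
      have hmem2 : ∀ z, z ∈ s ↔ z = c ∨ z = a ∨ z = b := by intro z; rw [hmem z]; tauto
      rcases orr a b hab with hab' | hba'
      · rcases orr b c hbc with hbc' | hcb'
        · rcases orr a c hac with hac' | hca'
          · exact ⟨a, helper_mem r hbc hab' hac' s hmem⟩
          · exact absurd (hc3 a b c hmem hab' hbc' hca') id
        · rcases orr a c hac with hac' | hca'
          · exact ⟨a, helper_mem r hbc hab' hac' s hmem⟩
          · exact ⟨c, helper_mem r hab hca' hcb' s hmem2⟩
      · rcases orr b c hbc with hbc' | hcb'
        · exact ⟨b, helper_mem r hac hba' hbc' s hmem1⟩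
        · rcases orr a c hac with hac' | hca'
          · exact absurd (hc3 a c b (by intro z; rw [hmem z]; tauto) hac' hcb' hba') id
          · exact ⟨c, helper_mem r hab hca' hcb' s hmem2⟩
    · rintro ⟨v, hv⟩
      rw [mem_Sblock_iff r] at hv
      obtain ⟨p, hp1, hp2, rfl⟩ := hv
      have hvp : v ∉ p := by
        intro h
        exact hT.1 v (by simpa using hp1 h)
      have hrp : ∀ x ∈ p, r v x := fun x hx => by simpa using hp1 hx
      refine ⟨⟨Finset.subset_univ _, ?_⟩, ?_⟩
      · rw [Finset.card_insert_of_notMem hvp, hp2]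
      · rintro ⟨a, b, c, hs, h1, h2, h3⟩
        have hmem' : ∀ z : Fin n, z ∈ insert v p ↔ z = a ∨ z = b ∨ z = c := by
          intro z; rw [hs]; simp
        have hmem := (hmem' v).mp (Finset.mem_insert_self v p)
        have hsub : ∀ x : Fin n, (x = a ∨ x = b ∨ x = c) → x ≠ v → r v x := by
          intro x hx hxv
          rcases Finset.mem_insert.mp ((hmem' x).mpr hx) with h | h
          · exact absurd h hxv
          · exact hrp x h
        rcases hmem with rfl | rfl | rfl
        · have : r v c := hsub c (Or.inr (Or.inr rfl)) (fun h => hT.1 v (h ▸ h3))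
          exact (hT.2 c v (hne h3)).mp h3 this
        · have : r v a := hsub a (Or.inl rfl) (fun h => hT.1 v (h ▸ h1))
          exact (hT.2 v a (hne h1).symm).mp this h1
        · have : r v b := hsub b (Or.inr (Or.inl rfl)) (fun h => hT.1 v (h ▸ h2))
          exact (hT.2 v b (hne h2).symm).mp this h2
  have hcards : ((Finset.univ.powersetCard 3 : Finset (Finset (Fin n))).filter (fun s => ¬ IsC3 r s)).card
      = ∑ v : Fin n, (outDeg r v).choose 2 := by
    rw [hset, Finset.card_biUnion hdisj]
    congr 1; ext v
    rw [Sblock, Finset.card_image_of_injOn, Finset.card_powersetCard]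
    · rfl
    · intro p hp q hq hpq
      simp only [Finset.mem_coe, Finset.mem_powersetCard] at hp hq
      have hvp : v ∉ p := fun h => hT.1 v (by simpa using hp.1 h)
      have hvq : v ∉ q := fun h => hT.1 v (by simpa using hq.1 h)
      rw [← Finset.erase_insert hvp, ← Finset.erase_insert hvq, hpq]
  have htotal := Finset.card_filter_add_card_filter_not
    (s := (Finset.univ.powersetCard 3 : Finset (Finset (Fin n)))) (p := IsC3 r)
  rw [Finset.card_powersetCard, Finset.card_univ, Fintype.card_fin] at htotal
  rw [numCopies, numCopiesIn]
  omega


lemma degsum {n : ℕ} (r : Fin n → Fin n → Prop) (hT : IsTournament r) :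
    2 * ∑ v, outDeg r v = n * (n - 1) := by
  have h1 : ∀ v : Fin n, outDeg r v = ∑ w, if r v w then 1 else 0 := by
    intro v; simp [outDeg, Finset.sum_boole]
  have h2 : ∑ v, outDeg r v = ∑ v, ∑ w, if r w v then 1 else 0 := by
    rw [Finset.sum_comm]; simp [h1]
  have key : (∑ v : Fin n, ∑ w : Fin n, if r w v then 1 else 0)
      + (∑ v : Fin n, ∑ w : Fin n, if r v w then 1 else 0)
      = ∑ v : Fin n, ∑ w : Fin n, if v = w then 0 else 1 := by
    rw [← Finset.sum_add_distrib]
    congr 1; ext v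
    rw [← Finset.sum_add_distrib]
    congr 1; ext w
    by_cases hvw : v = w
    · subst hvw; simp [hT.1 v]
    · have hr := hT.2 v w hvw
      by_cases h : r v w
      · simp [h, hr.mp h, hvw]
      · have hwv : r w v := by
          by_contra hc; exact h (hr.mpr hc)
        simp [h, hwv, hvw]
  have h3 : ∀ v : Fin n, (∑ w : Fin n, if v = w then 0 else 1) = n - 1 := by
    intro v
    have e1 : (∑ w : Fin n, if v = w then 0 else 1) + (∑ w : Fin n, if v = w then 1 else 0) = n := by
      rw [← Finset.sum_add_distrib]
      have : ∀ w : Fin n, ((if v = w then 0 else 1) + (if v = w then 1 else 0)) = 1 := by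
        intro w; by_cases h : v = w <;> simp [h]
      simp [this]
    have e2 : (∑ w : Fin n, if v = w then 1 else 0) = 1 := by
      simp [Finset.sum_ite_eq]
    omega
  have h4 : ∑ v : Fin n, ∑ w : Fin n, (if v = w then 0 else 1) = n * (n-1) := by
    simp [h3, Finset.sum_const]
  have h5 : ∑ v, outDeg r v = ∑ v : Fin n, ∑ w : Fin n, if r v w then 1 else 0 := by simp [h1]
  omega

def R0 : ℕ → ℕ → Prop := fun i j => (i < j ∧ Even (i + j)) ∨ (j < i ∧ ¬ Even (i + j))

def rBal (n : ℕ) : Fin n → Fin n → Prop := fun i j => R0 (i : ℕ) (j : ℕ)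

lemma rBal_tournament (n : ℕ) : IsTournament (rBal n) := by
  constructor
  · intro v h
    rcases h with ⟨h, -⟩ | ⟨h, -⟩ <;> omega
  · intro u v huv
    have huv' : (u : ℕ) ≠ (v : ℕ) := fun h => huv (Fin.ext h)
    unfold rBal R0
    rw [Nat.add_comm (v : ℕ) (u : ℕ)]
    constructor
    · rintro (⟨h1, h2⟩ | ⟨h1, h2⟩) (⟨g1, g2⟩ | ⟨g1, g2⟩) <;>
        first | omega | exact g2 h2 | exact h2 g2
    · intro h
      by_cases he : Even ((u : ℕ) + v)
      · rcases Nat.lt_or_ge (u : ℕ) v with hl | hl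
        · exact Or.inl ⟨hl, he⟩
        · exact absurd (Or.inl ⟨by omega, he⟩) h
      · rcases Nat.lt_or_ge (v : ℕ) u with hl | hl
        · exact Or.inr ⟨hl, he⟩
        · exact absurd (Or.inr ⟨by omega, he⟩) h

lemma evenCount : ∀ m : ℕ, (((Finset.range m).filter (fun j => Even j)).card = (m+1)/2)
    ∧ (((Finset.range m).filter (fun j => ¬ Even j)).card = m/2) := by
  intro m
  induction m with
  | zero => simp
  | succ k ih =>
    rw [Finset.range_add_one, Finset.filter_insert, Finset.filter_insert]
    by_cases hk : Even k
    · rw [if_pos hk, if_neg (by simpa using hk),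
        Finset.card_insert_of_notMem (by simp)]
      obtain ⟨t, ht⟩ := hk
      omega
    · rw [if_neg hk, if_pos hk, Finset.card_insert_of_notMem (by simp)]
      obtain ⟨t, ht⟩ := Nat.not_even_iff_odd.mp hk
      omega

lemma Dval : ∀ m i : ℕ, i < m →
    (((Finset.range m).filter (fun j => R0 i j)).card = if Even i then (m-1)/2 else m/2) := by
  intro m
  induction m with
  | zero => omega
  | succ k ih =>
    intro i hi
    rw [Finset.range_add_one, Finset.filter_insert]
    rcases Nat.lt_or_ge i k with hik | hik
    · -- i < k
      by_cases hectx : R0 i k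
      · rw [if_pos hectx]
        rw [Finset.card_insert_of_notMem (by simp), ih i hik]
        have he : Even (i + k) := by
          rcases hectx with ⟨-, h⟩ | ⟨h, -⟩ <;> first | exact h | omega
        by_cases hei : Even i
        · have hek : Even k := by
            rcases hei with ⟨a, ha⟩; rcases he with ⟨b, hb⟩; exact ⟨b - a, by omega⟩
          rcases hek with ⟨b, hb⟩
          simp [hei]; omega
        · have hok : ¬ Even k := by
            intro ⟨b, hb⟩
            exact hei (by rcases he with ⟨c, hc⟩; exact ⟨c - b, by omega⟩)
          obtain ⟨b, hb⟩ := Nat.not_even_iff_odd.mp hok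
          simp [hei]; omega
      · rw [if_neg hectx, ih i hik]
        have hne : ¬ Even (i + k) := by
          intro h; exact hectx (Or.inl ⟨hik, h⟩)
        by_cases hei : Even i
        · have hok : ¬ Even k := by
            intro ⟨b, hb⟩
            exact hne (by rcases hei with ⟨a, ha⟩; exact ⟨a + b, by omega⟩)
          obtain ⟨b, hb⟩ := Nat.not_even_iff_odd.mp hok
          simp [hei]; omega
        · have hek : Even k := by
            rcases Nat.not_even_iff_odd.mp hei with ⟨a, ha⟩
            rcases Nat.even_or_odd k with h | ⟨b, hb⟩
            · exact h
            · exact absurd ⟨a + b + 1, by omega⟩ hne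
          rcases hek with ⟨b, hb⟩
          simp [hei]; omega
    · -- i = k
      have hik' : i = k := by omega
      subst hik'
      rw [if_neg (by unfold R0; omega)]
      have hfc : (Finset.range i).filter (fun j => R0 i j)
          = (Finset.range i).filter (fun j => ¬ Even (i + j)) := by
        apply Finset.filter_congr
        intro j hj
        simp only [Finset.mem_range] at hj
        unfold R0
        constructor
        · rintro (⟨h, -⟩ | ⟨-, h⟩)
          · omega
          · exact h
        · intro h; exact Or.inr ⟨hj, h⟩
      rw [hfc]
      by_cases hei : Even i
      · have : (Finset.range i).filter (fun j => ¬ Even (i + j))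
            = (Finset.range i).filter (fun j => ¬ Even j) := by
          apply Finset.filter_congr
          intro j hj
          rcases hei with ⟨a, ha⟩
          constructor
          · intro h hj'; exact h (by rcases hj' with ⟨b, hb⟩; exact ⟨a + b, by omega⟩)
          · intro h hj'; exact h (by rcases hj' with ⟨b, hb⟩; exact ⟨b - a, by omega⟩)
        rw [this, (evenCount i).2, if_pos hei]
        rcases hei with ⟨a, ha⟩; omega
      · have : (Finset.range i).filter (fun j => ¬ Even (i + j))
            = (Finset.range i).filter (fun j => Even j) := by
          apply Finset.filter_congr
          intro j hj
          obtain ⟨a, ha⟩ := Nat.not_even_iff_odd.mp hei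
          constructor
          · intro h
            rcases Nat.even_or_odd j with hj' | ⟨b, hb⟩
            · exact hj'
            · exact absurd ⟨a + b + 1, by omega⟩ h
          · rintro ⟨b, hb⟩ ⟨c, hc⟩; omega
        rw [this, (evenCount i).1, if_neg hei]

lemma rBal_outDeg (n : ℕ) (v : Fin n) :
    outDeg (rBal n) v = (n - 1) / 2 ∨ outDeg (rBal n) v = n / 2 := by
  have h1 : outDeg (rBal n) v = ((Finset.range n).filter (fun j => R0 (v : ℕ) j)).card := by
    rw [outDeg, Finset.card_filter, Finset.card_filter]
    exact Fin.sum_univ_eq_sum_range (fun m => if R0 (v : ℕ) m then 1 else 0) n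
  rw [h1, Dval n v v.isLt]
  by_cases h : Even (v : ℕ) <;> simp [h]

noncomputable def sch {n : ℕ} (r : Fin n → Fin n → Prop) : ℕ :=
  ∑ v, (outDeg r v).choose 2

def tt (n : ℕ) : ℕ := (n - 1) / 2

noncomputable def slack {n : ℕ} (r : Fin n → Fin n → Prop) (v : Fin n) : ℤ :=
  ((outDeg r v : ℤ) - tt n) * ((outDeg r v : ℤ) - tt n - 1)

def Kc (n : ℕ) : ℤ :=
  n * ((tt n : ℤ) * (tt n - 1) - 2 * tt n * tt n) + (tt n) * (n * (n - 1))

lemma choose2' (d : ℕ) : (2 * (d.choose 2) : ℤ) = (d : ℤ) * ((d : ℤ) - 1) := by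
  induction d with
  | zero => simp
  | succ k ih =>
    rw [Nat.choose_succ_succ, Nat.choose_one_right]
    push_cast
    push_cast at ih
    linear_combination ih

lemma slack_nonneg {n : ℕ} (r : Fin n → Fin n → Prop) (v : Fin n) : 0 ≤ slack r v := by
  unfold slack
  set x : ℤ := (outDeg r v : ℤ) - tt n with hx
  rcases le_or_gt x 0 with h | h
  · have := mul_nonneg (neg_nonneg.mpr h) (by linarith : (0:ℤ) ≤ 1 - x)
    nlinarith
  · have h1 : (1:ℤ) ≤ x := h
    exact mul_nonneg (by linarith) (by linarith)

lemma slack_eq_zero_iff {n : ℕ} (r : Fin n → Fin n → Prop) (v : Fin n) :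
    slack r v = 0 ↔ (outDeg r v = tt n ∨ outDeg r v = tt n + 1) := by
  unfold slack
  rw [mul_eq_zero, sub_eq_zero, sub_eq_zero]
  constructor
  · rintro (h | h)
    · left; exact_mod_cast h
    · right
      have : (outDeg r v : ℤ) = tt n + 1 := by linarith
      exact_mod_cast this
  · rintro (h | h)
    · left; exact_mod_cast congrArg (Nat.cast : ℕ → ℤ) h
    · right; rw [h]; push_cast; ring

lemma schEq {n : ℕ} (r : Fin n → Fin n → Prop) (hT : IsTournament r) :
    (2 * (sch r) : ℤ) = Kc n + ∑ v, slack r v := by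
  have hd := degsum r hT
  have hd' : (2 : ℤ) * ∑ v, (outDeg r v : ℤ) = (n : ℤ) * ((n : ℤ) - 1) := by
    have : ((2 * ∑ v, outDeg r v : ℕ) : ℤ) = ((n * (n-1) : ℕ) : ℤ) := by exact_mod_cast hd
    push_cast at this
    rcases Nat.eq_zero_or_pos n with h0 | h0
    · subst h0; simp
    · rw [Nat.cast_sub h0] at this; push_cast at this; linarith [this]
  have e1 : ∀ v : Fin n, (2 * ((outDeg r v).choose 2) : ℤ)
      = ((tt n : ℤ) * (tt n - 1) - 2 * tt n * tt n) + 2 * (tt n) * (outDeg r v) + slack r v := by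
    intro v
    rw [choose2']
    unfold slack
    ring
  have e2 : (2 * (sch r) : ℤ) = ∑ v : Fin n, (2 * ((outDeg r v).choose 2) : ℤ) := by
    unfold sch
    push_cast
    rw [Finset.mul_sum]
  rw [e2]
  calc ∑ v : Fin n, (2 * ((outDeg r v).choose 2) : ℤ)
      = ∑ v : Fin n, (((tt n : ℤ) * (tt n - 1) - 2 * tt n * tt n) + 2 * (tt n) * (outDeg r v) + slack r v) :=
        Finset.sum_congr rfl (fun v _ => e1 v)
    _ = (∑ _v : Fin n, ((tt n : ℤ) * (tt n - 1) - 2 * tt n * tt n))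
        + (∑ v : Fin n, 2 * (tt n : ℤ) * (outDeg r v)) + ∑ v, slack r v := by
        rw [← Finset.sum_add_distrib, ← Finset.sum_add_distrib]
    _ = n * ((tt n : ℤ) * (tt n - 1) - 2 * tt n * tt n)
        + (tt n : ℤ) * (2 * ∑ v : Fin n, (outDeg r v : ℤ)) + ∑ v, slack r v := by
        rw [Finset.sum_const, Finset.card_univ, Fintype.card_fin, ← Finset.mul_sum,
          nsmul_eq_mul]
        ring
    _ = Kc n + ∑ v, slack r v := by
        rw [hd', Kc]

theorem stmt3 (n : ℕ) (r : Fin n → Fin n → Prop) (hT : IsTournament r) :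
    (∀ r' : Fin n → Fin n → Prop, IsTournament r' →
        numCopies (IsC3 r') 3 ≤ numCopies (IsC3 r) 3) ↔
      (∀ v : Fin n, outDeg r v = (n - 1) / 2 ∨ outDeg r v = n / 2) := by
  classical
  have hKeq : ∀ r' : Fin n → Fin n → Prop, IsTournament r' →
      (∀ v, outDeg r' v = tt n ∨ outDeg r' v = tt n + 1) → (2 * sch r' : ℤ) = Kc n := by
    intro r' hT' h
    rw [schEq r' hT']
    have h0 : ∑ v, slack r' v = 0 :=
      Finset.sum_eq_zero (fun v _ => (slack_eq_zero_iff r' v).mpr (h v))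
    rw [h0, add_zero]
  have hbridge : ∀ r' : Fin n → Fin n → Prop, IsTournament r' →
      (numCopies (IsC3 r') 3 ≤ numCopies (IsC3 r) 3 ↔ sch r ≤ sch r') := by
    intro r' hT'
    have h1 : numCopies (IsC3 r) 3 + sch r = n.choose 3 := countA r hT
    have h2 : numCopies (IsC3 r') 3 + sch r' = n.choose 3 := countA r' hT'
    omega
  constructor
  · intro hmax
    have h0 := (hbridge (rBal n) (rBal_tournament n)).mp (hmax _ (rBal_tournament n))
    have hbal : ∀ v, outDeg (rBal n) v = tt n ∨ outDeg (rBal n) v = tt n + 1 := by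
      intro v
      rcases rBal_outDeg n v with h | h <;> unfold tt <;> omega
    have hK0 : (2 * sch (rBal n) : ℤ) = Kc n := hKeq _ (rBal_tournament n) hbal
    have hKr := schEq r hT
    have hle : (2 * sch r : ℤ) ≤ 2 * sch (rBal n) := by
      exact_mod_cast Nat.mul_le_mul_left 2 h0
    have nn : (0 : ℤ) ≤ ∑ v, slack r v := Finset.sum_nonneg (fun v _ => slack_nonneg r v)
    have hsum0 : ∑ v, slack r v = 0 := by linarith
    have heach : ∀ v, slack r v = 0 := by
      intro v
      exact (Finset.sum_eq_zero_iff_of_nonneg (fun w _ => slack_nonneg r w)).mp hsum0 v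
        (Finset.mem_univ v)
    intro v
    have hn : 0 < n := v.pos
    rcases (slack_eq_zero_iff r v).mp (heach v) with h | h
    · left; unfold tt at h; exact h
    · by_cases hpar : n % 2 = 0
      · right; unfold tt at h; omega
      · exfalso
        have hall : ∀ w, outDeg r w = tt n ∨ outDeg r w = tt n + 1 :=
          fun w => (slack_eq_zero_iff r w).mp (heach w)
        have hsum := degsum r hT
        have hlt : ∑ _w : Fin n, tt n < ∑ w, outDeg r w :=
          Finset.sum_lt_sum (fun i _ => by rcases hall i with h' | h' <;> omega)
            ⟨v, Finset.mem_univ v, by omega⟩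
        rw [Finset.sum_const, Finset.card_univ, Fintype.card_fin, smul_eq_mul] at hlt
        have h2t : n - 1 = 2 * tt n := by unfold tt; omega
        have htwice : 2 * ∑ w, outDeg r w = 2 * (n * tt n) := by rw [hsum, h2t]; ring
        have hS : ∑ w, outDeg r w = n * tt n :=
          Nat.eq_of_mul_eq_mul_left (by norm_num) htwice
        rw [hS] at hlt
        exact lt_irrefl _ hlt
  · intro hdeg r' hT'
    rw [hbridge r' hT']
    have hr : (2 * sch r : ℤ) = Kc n :=
      hKeq r hT (fun v => by rcases hdeg v with h | h <;> unfold tt <;> omega)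
    have hr' := schEq r' hT'
    have nn : (0 : ℤ) ≤ ∑ v, slack r' v := Finset.sum_nonneg (fun v _ => slack_nonneg r' v)
    have hfin : (2 * sch r : ℤ) ≤ 2 * sch r' := by rw [hr, hr']; linarith
    have : (sch r : ℤ) ≤ sch r' := by linarith
    exact_mod_cast this
end CountA
end

section
/- For n ≥ 4, every carousel tournament in 𝒞_n contains no induced copy of C₃⁺ and no induced copy of C₃⁻, and every vertex has out-degree ⌊(n-1)/2⌋ or ⌈(n-1)/2⌉. -/
open Finset
open scoped Classical

section CarouselAux

/-- Normalized circular distance from `v` to `x` (in `{1,…,n-1}` when `x ≠ v`). -/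
def ddist (n : ℕ) (v x : Fin n) : ℤ :=
  if v.val < x.val then (x.val : ℤ) - v.val else (x.val : ℤ) - v.val + (n : ℤ)

variable {n : ℕ} {r : Fin n → Fin n → Prop} {e : Fin n ≃ Fin n}

lemma ddist_bounds {v x : Fin n} (h : x ≠ v) :
    1 ≤ ddist n v x ∧ ddist n v x ≤ (n : ℤ) - 1 := by
  have hx := x.isLt; have hv := v.isLt
  have hne : x.val ≠ v.val := fun hh => h (Fin.ext hh)
  unfold ddist; split_ifs <;> omega

lemma ddist_inj {v x y : Fin n} (h : ddist n v x = ddist n v y) : x = y := by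
  have hx := x.isLt; have hv := v.isLt; have hy := y.isLt
  apply Fin.ext
  unfold ddist at h; split_ifs at h <;> omega

lemma ddist_rev {v x : Fin n} (h : x ≠ v) : ddist n v x + ddist n x v = n := by
  have hx := x.isLt; have hv := v.isLt
  have hne : x.val ≠ v.val := fun hh => h (Fin.ext hh)
  unfold ddist; split_ifs <;> omega

/-- Carousel arc from the forward condition, in terms of `ddist`. -/
lemma arc1
    (he : ∀ i j : Fin n,
      ((0 < (j : ℤ) - (i : ℤ) ∧ 2 * ((j : ℤ) - (i : ℤ)) < (n : ℤ)) ∨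
        (n : ℤ) < 2 * ((i : ℤ) - (j : ℤ))) → r (e i) (e j))
    {v x : Fin n} (hx : x ≠ v) (h : 2 * ddist n v x < n) : r (e v) (e x) := by
  have hxl := x.isLt; have hvl := v.isLt
  have hne : x.val ≠ v.val := fun hh => hx (Fin.ext hh)
  apply he v x
  unfold ddist at h; split_ifs at h <;> omega

/-- If both `x` and `y` are measured from base `v`, a short forward gap gives an arc. -/
lemma arc2
    (he : ∀ i j : Fin n,
      ((0 < (j : ℤ) - (i : ℤ) ∧ 2 * ((j : ℤ) - (i : ℤ)) < (n : ℤ)) ∨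
        (n : ℤ) < 2 * ((i : ℤ) - (j : ℤ))) → r (e i) (e j))
    (v : Fin n) {x y : Fin n} (h1 : ddist n v x < ddist n v y)
    (h2 : 2 * (ddist n v y - ddist n v x) < n) : r (e x) (e y) := by
  have hxl := x.isLt; have hvl := v.isLt; have hyl := y.isLt
  apply he x y
  unfold ddist at h1 h2; split_ifs at h1 h2 <;> omega

lemma ddist_le_of_r (hT : IsTournament r)
    (he : ∀ i j : Fin n,
      ((0 < (j : ℤ) - (i : ℤ) ∧ 2 * ((j : ℤ) - (i : ℤ)) < (n : ℤ)) ∨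
        (n : ℤ) < 2 * ((i : ℤ) - (j : ℤ))) → r (e i) (e j))
    {v x : Fin n} (hx : x ≠ v) (hr : r (e v) (e x)) : 2 * ddist n v x ≤ n := by
  by_contra hcon
  have hrev := ddist_rev hx
  have hvx : v ≠ x := Ne.symm hx
  have h2 : r (e x) (e v) := arc1 he hvx (by omega)
  exact (hT.2 (e v) (e x) (fun hh => hx (e.injective hh).symm)).mp hr h2

lemma ddist_ge_of_r (hT : IsTournament r)
    (he : ∀ i j : Fin n,
      ((0 < (j : ℤ) - (i : ℤ) ∧ 2 * ((j : ℤ) - (i : ℤ)) < (n : ℤ)) ∨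
        (n : ℤ) < 2 * ((i : ℤ) - (j : ℤ))) → r (e i) (e j))
    {v x : Fin n} (hx : x ≠ v) (hr : r (e x) (e v)) : (n : ℤ) ≤ 2 * ddist n v x := by
  by_contra hcon
  have h2 : r (e v) (e x) := arc1 he hx (by omega)
  exact (hT.2 (e v) (e x) (fun hh => hx (e.injective hh).symm)).mp h2 hr

/-- Ordering of normalized distances induced by arcs, when gaps are short. -/
lemma ord_of_r (hT : IsTournament r)
    (he : ∀ i j : Fin n,
      ((0 < (j : ℤ) - (i : ℤ) ∧ 2 * ((j : ℤ) - (i : ℤ)) < (n : ℤ)) ∨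
        (n : ℤ) < 2 * ((i : ℤ) - (j : ℤ))) → r (e i) (e j))
    (v : Fin n) {x y : Fin n} (hxy : x ≠ y)
    (hgap : 2 * (ddist n v (e.symm x) - ddist n v (e.symm y)) < n)
    (hrxy : r x y) :
    ddist n v (e.symm x) < ddist n v (e.symm y) := by
  by_contra hcon
  have hne : ddist n v (e.symm x) ≠ ddist n v (e.symm y) :=
    fun hh => hxy (e.symm.injective (ddist_inj hh))
  have hlt : ddist n v (e.symm y) < ddist n v (e.symm x) := by omega
  have h2 : r (e (e.symm y)) (e (e.symm x)) := arc2 he v hlt hgap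
  simp only [Equiv.apply_symm_apply] at h2
  exact (hT.2 x y hxy).mp hrxy h2

lemma card_ddist (hn : 0 < n) (v : Fin n) (m : ℕ) (hm : m ≤ n - 1) :
    (Finset.univ.filter (fun x : Fin n => x ≠ v ∧ ddist n v x ≤ (m : ℤ))).card = m := by
  have hcard : (Finset.univ.filter
      (fun x : Fin n => x ≠ v ∧ ddist n v x ≤ (m : ℤ))).card = (Finset.Icc 1 m).card := by
    apply Finset.card_bij (fun x _ => (ddist n v x).toNat)
    · intro a ha
      simp only [Finset.mem_filter, Finset.mem_univ, true_and] at ha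
      have hb := ddist_bounds ha.1
      simp only [Finset.mem_Icc]
      omega
    · intro a ha b hb hab
      simp only [Finset.mem_filter, Finset.mem_univ, true_and] at ha hb
      have h1 := ddist_bounds ha.1
      have h2 := ddist_bounds hb.1
      exact ddist_inj (v := v) (by omega)
    · intro k hk
      simp only [Finset.mem_Icc] at hk
      have hvl := v.isLt
      refine ⟨⟨(v.val + k) % n, Nat.mod_lt _ hn⟩, ?_⟩
      have hmod : (v.val + k) % n = if v.val + k < n then v.val + k else v.val + k - n := by
        split_ifs with h
        · exact Nat.mod_eq_of_lt h
        · rw [Nat.mod_eq_sub_mod (by omega)]; exact Nat.mod_eq_of_lt (by omega)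
      have hdd : ddist n v ⟨(v.val + k) % n, Nat.mod_lt _ hn⟩ = (k : ℤ) := by
        unfold ddist
        simp only [hmod]
        split_ifs <;> omega
      have hxne : (⟨(v.val + k) % n, Nat.mod_lt _ hn⟩ : Fin n) ≠ v := by
        intro hh
        have : (v.val + k) % n = v.val := congrArg Fin.val hh
        rw [hmod] at this
        split_ifs at this <;> omega
      refine ⟨?_, by rw [hdd]; omega⟩
      simp only [Finset.mem_filter, Finset.mem_univ, true_and]
      exact ⟨hxne, by rw [hdd]; exact_mod_cast Int.ofNat_le.mpr hk.2⟩
  rw [hcard, Nat.card_Icc]; omega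

lemma card_pred (hn : 0 < n) (e : Fin n ≃ Fin n) (v : Fin n) (m : ℕ) (hm : m ≤ n - 1) :
    (Finset.univ.filter
      (fun x : Fin n => x ≠ v ∧ ddist n (e.symm v) (e.symm x) ≤ (m : ℤ))).card = m := by
  refine Eq.trans ?_ (card_ddist hn (e.symm v) m hm)
  apply Finset.card_bij (fun x _ => e.symm x)
  · intro a ha
    simp only [Finset.mem_filter, Finset.mem_univ, true_and] at ha ⊢
    exact ⟨fun hh => ha.1 (e.symm.injective hh), ha.2⟩
  · intro a _ b _ hab
    exact e.symm.injective hab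
  · intro b hb
    simp only [Finset.mem_filter, Finset.mem_univ, true_and] at hb
    refine ⟨e b, ?_, by simp⟩
    simp only [Finset.mem_filter, Finset.mem_univ, true_and, Equiv.symm_apply_apply]
    exact ⟨fun hh => hb.1 (by rw [← hh, Equiv.symm_apply_apply]), hb.2⟩

end CarouselAux

theorem stmt11 (n : ℕ) (hn : 4 ≤ n) (r : Fin n → Fin n → Prop) (hT : IsTournament r)
    (hc : IsCarousel n r) :
    (∀ s : Finset (Fin n), ¬ IsC3plus r s) ∧ (∀ s : Finset (Fin n), ¬ IsC3minus r s) ∧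
    (∀ v : Fin n, outDeg r v = (n - 1) / 2 ∨ outDeg r v = n / 2) := by
  obtain ⟨e, he⟩ := hc
  have hsym : ∀ x y : Fin n, x ≠ y → e.symm x ≠ e.symm y :=
    fun x y hxy hh => hxy (e.symm.injective hh)
  refine ⟨?_, ?_, ?_⟩
  · -- no C₃⁺
    rintro s ⟨v, a, b, c, hva, hvb, hvc, -, hrva, hrvb, hrvc, hrab, hrbc, hrca⟩
    have hab : a ≠ b := fun hh => hT.1 b (hh ▸ hrab)
    have hbc : b ≠ c := fun hh => hT.1 c (hh ▸ hrbc)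
    have hca : c ≠ a := fun hh => hT.1 a (hh ▸ hrca)
    have hra : r (e (e.symm v)) (e (e.symm a)) := by simpa using hrva
    have hrb : r (e (e.symm v)) (e (e.symm b)) := by simpa using hrvb
    have hrc : r (e (e.symm v)) (e (e.symm c)) := by simpa using hrvc
    have hDa : 2 * ddist n (e.symm v) (e.symm a) ≤ n :=
      ddist_le_of_r hT he (hsym a v (Ne.symm hva)) hra
    have hDb : 2 * ddist n (e.symm v) (e.symm b) ≤ n :=
      ddist_le_of_r hT he (hsym b v (Ne.symm hvb)) hrb
    have hDc : 2 * ddist n (e.symm v) (e.symm c) ≤ n :=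
      ddist_le_of_r hT he (hsym c v (Ne.symm hvc)) hrc
    have hBa := ddist_bounds (hsym a v (Ne.symm hva))
    have hBb := ddist_bounds (hsym b v (Ne.symm hvb))
    have hBc := ddist_bounds (hsym c v (Ne.symm hvc))
    have o1 := ord_of_r hT he (e.symm v) hab (by omega) hrab
    have o2 := ord_of_r hT he (e.symm v) hbc (by omega) hrbc
    have o3 := ord_of_r hT he (e.symm v) (Ne.symm hca).symm (by omega) hrca
    omega
  · -- no C₃⁻
    rintro s ⟨v, a, b, c, hva, hvb, hvc, -, hrav, hrbv, hrcv, hrab, hrbc, hrca⟩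
    have hab : a ≠ b := fun hh => hT.1 b (hh ▸ hrab)
    have hbc : b ≠ c := fun hh => hT.1 c (hh ▸ hrbc)
    have hca : c ≠ a := fun hh => hT.1 a (hh ▸ hrca)
    have hra : r (e (e.symm a)) (e (e.symm v)) := by simpa using hrav
    have hrb : r (e (e.symm b)) (e (e.symm v)) := by simpa using hrbv
    have hrc : r (e (e.symm c)) (e (e.symm v)) := by simpa using hrcv
    have hDa : (n : ℤ) ≤ 2 * ddist n (e.symm v) (e.symm a) :=
      ddist_ge_of_r hT he (hsym a v (Ne.symm hva)) hra
    have hDb : (n : ℤ) ≤ 2 * ddist n (e.symm v) (e.symm b) :=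
      ddist_ge_of_r hT he (hsym b v (Ne.symm hvb)) hrb
    have hDc : (n : ℤ) ≤ 2 * ddist n (e.symm v) (e.symm c) :=
      ddist_ge_of_r hT he (hsym c v (Ne.symm hvc)) hrc
    have hBa := ddist_bounds (hsym a v (Ne.symm hva))
    have hBb := ddist_bounds (hsym b v (Ne.symm hvb))
    have hBc := ddist_bounds (hsym c v (Ne.symm hvc))
    have o1 := ord_of_r hT he (e.symm v) hab (by omega) hrab
    have o2 := ord_of_r hT he (e.symm v) hbc (by omega) hrbc
    have o3 := ord_of_r hT he (e.symm v) (Ne.symm hca).symm (by omega) hrca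
    omega
  · -- out-degrees
    intro v
    have hA : (Finset.univ.filter (fun x : Fin n =>
        x ≠ v ∧ ddist n (e.symm v) (e.symm x) ≤ (((n - 1) / 2 : ℕ) : ℤ))).card = (n - 1) / 2 :=
      card_pred (by omega) e v _ (by omega)
    have hB : (Finset.univ.filter (fun x : Fin n =>
        x ≠ v ∧ ddist n (e.symm v) (e.symm x) ≤ ((n / 2 : ℕ) : ℤ))).card = n / 2 :=
      card_pred (by omega) e v _ (by omega)
    have hsub1 : (Finset.univ.filter (fun x : Fin n =>
        x ≠ v ∧ ddist n (e.symm v) (e.symm x) ≤ (((n - 1) / 2 : ℕ) : ℤ)))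
        ⊆ Finset.univ.filter (fun w => r v w) := by
      intro x hx
      simp only [Finset.mem_filter, Finset.mem_univ, true_and] at hx ⊢
      obtain ⟨hxv, hle⟩ := hx
      have h1 : r (e (e.symm v)) (e (e.symm x)) :=
        arc1 he (hsym x v hxv) (by omega)
      simpa using h1
    have hsub2 : Finset.univ.filter (fun w => r v w)
        ⊆ (Finset.univ.filter (fun x : Fin n =>
        x ≠ v ∧ ddist n (e.symm v) (e.symm x) ≤ ((n / 2 : ℕ) : ℤ))) := by
      intro x hx
      simp only [Finset.mem_filter, Finset.mem_univ, true_and] at hx ⊢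
      have hxv : x ≠ v := fun hh => hT.1 v (hh ▸ hx)
      have h1 : r (e (e.symm v)) (e (e.symm x)) := by simpa using hx
      have h2 := ddist_le_of_r hT he (hsym x v hxv) h1
      exact ⟨hxv, by omega⟩
    have h1 := Finset.card_le_card hsub1
    have h2 := Finset.card_le_card hsub2
    unfold outDeg
    omega
end

section
/- Let T be a tournament on n vertices in which every vertex has out-degree in {⌊(n-1)/2⌋, ⌈(n-1)/2⌉} and which contains no induced C₃⁺ and no induced C₃⁻. Then T is a carousel, i.e., T ∈ 𝒞_n. -/
open Finset
open scoped Classical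

lemma enumTrans {V : Type*} (r : V → V → Prop) (s : Finset V)
    (hasym : ∀ a b, r a b → ¬ r b a)
    (htot : ∀ a ∈ s, ∀ b ∈ s, a ≠ b → r a b ∨ r b a)
    (htr : ∀ a ∈ s, ∀ b ∈ s, ∀ c ∈ s, r a b → r b c → r a c) :
    ∃ f : Fin s.card → V, (∀ i, f i ∈ s) ∧ (∀ i j, i < j → r (f i) (f j)) := by
  classical
  let r' : {x // x ∈ s} → {x // x ∈ s} → Prop := fun a b => r a.1 b.1
  have htri : IsTrichotomous {x // x ∈ s} r' := ⟨by
    intro a b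
    rcases eq_or_ne a b with h | h
    · exact fun _ _ => h
    · rcases htot a.1 a.2 b.1 b.2 (fun hh => h (Subtype.ext hh)) with h' | h'
      · exact fun hn _ => absurd h' hn
      · exact fun _ hn => absurd h' hn⟩
  have hirr : IsIrrefl {x // x ∈ s} r' := ⟨fun a ha => hasym _ _ ha ha⟩
  have htrans : IsTrans {x // x ∈ s} r' :=
    ⟨fun a b c hab hbc => htr a.1 a.2 b.1 b.2 c.1 c.2 hab hbc⟩
  have hsto : IsStrictTotalOrder {x // x ∈ s} r' := { }
  letI : DecidableRel r' := fun a b => Classical.dec _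
  letI lo : LinearOrder {x // x ∈ s} := linearOrderOfSTO r'
  have hcard : Fintype.card {x // x ∈ s} = s.card := Fintype.card_coe s
  let e := monoEquivOfFin _ hcard
  refine ⟨fun i => (e i).1, fun i => (e i).2, fun i j hij => ?_⟩
  exact e.strictMono hij

lemma dcMem {q : ℕ} (B : Finset (Fin q))
    (hcl : ∀ b b' : Fin q, b' ≤ b → b ∈ B → b' ∈ B) (b : Fin q) :
    b ∈ B ↔ (b : ℕ) < B.card := by
  constructor
  · intro hb
    have hsub : Finset.Iic b ⊆ B := fun x hx => hcl b x (Finset.mem_Iic.mp hx) hb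
    have := Finset.card_le_card hsub
    rw [Fin.card_Iic] at this; omega
  · intro hb
    by_contra hnb
    have hsub : B ⊆ Finset.Iio b := by
      intro x hx
      rw [Finset.mem_Iio]
      rcases lt_or_ge x b with h | h
      · exact h
      · exact absurd (hcl x b h hx) hnb
    have := Finset.card_le_card hsub
    rw [Fin.card_Iio] at this; omega

lemma buildCarousel (n P Q : ℕ) (r : Fin n → Fin n → Prop)
    (hpq : P + Q + 1 = n) (hQ : Q = P ∨ Q = P + 1)
    (v : Fin n) (u : Fin P → Fin n) (w : Fin Q → Fin n)
    (hu : ∀ i, r v (u i)) (hw : ∀ b, r (w b) v)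
    (humono : ∀ i j : Fin P, i < j → r (u i) (u j))
    (hwmono : ∀ b b' : Fin Q, b < b' → r (w b) (w b'))
    (f5 : ∀ (i : Fin P) (b : Fin Q), (b : ℕ) ≤ (i : ℕ) → r (u i) (w b))
    (f6 : ∀ (i : Fin P) (b : Fin Q), (i : ℕ) + 1 + (Q - P) ≤ (b : ℕ) → r (w b) (u i))
    (huinj : Function.Injective u) (hwinj : Function.Injective w)
    (hUW : ∀ i b, u i ≠ w b) (hUv : ∀ i, u i ≠ v) (hWv : ∀ b, w b ≠ v) :
    IsCarousel n r := by
  have hx1 : ∀ x : Fin n, ¬ x.1 = 0 → x.1 ≤ P → x.1 - 1 < P := by intro x h h'; omega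
  have hx2 : ∀ x : Fin n, ¬ x.1 ≤ P → x.1 - 1 - P < Q := by intro x h; have := x.2; omega
  set φ : Fin n → Fin n := fun x =>
    if h0 : x.1 = 0 then v
    else if hle : x.1 ≤ P then u ⟨x.1 - 1, hx1 x h0 hle⟩
    else w ⟨x.1 - 1 - P, hx2 x hle⟩ with hφdef
  have hφ0 : ∀ x : Fin n, x.1 = 0 → φ x = v := by
    intro x h; rw [hφdef]; simp [h]
  have hφ1 : ∀ (x : Fin n) (h0 : ¬ x.1 = 0) (hle : x.1 ≤ P),
      φ x = u ⟨x.1 - 1, hx1 x h0 hle⟩ := by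
    intro x h0 hle; rw [hφdef]; simp [h0, hle]
  have hφ2 : ∀ (x : Fin n) (h0 : ¬ x.1 = 0) (hle : ¬ x.1 ≤ P),
      φ x = w ⟨x.1 - 1 - P, hx2 x hle⟩ := by
    intro x h0 hle; rw [hφdef]; simp [h0, hle]
  have hinj : Function.Injective φ := by
    intro a b hab
    by_cases ha0 : a.1 = 0 <;> by_cases hb0 : b.1 = 0
    · exact Fin.ext (ha0.trans hb0.symm)
    · exfalso; rw [hφ0 a ha0] at hab
      by_cases hbl : b.1 ≤ P
      · rw [hφ1 b hb0 hbl] at hab; exact hUv _ hab.symm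
      · rw [hφ2 b hb0 hbl] at hab; exact hWv _ hab.symm
    · exfalso; rw [hφ0 b hb0] at hab
      by_cases hal : a.1 ≤ P
      · rw [hφ1 a ha0 hal] at hab; exact hUv _ hab
      · rw [hφ2 a ha0 hal] at hab; exact hWv _ hab
    · by_cases hal : a.1 ≤ P <;> by_cases hbl : b.1 ≤ P
      · rw [hφ1 a ha0 hal, hφ1 b hb0 hbl] at hab
        have h2 := congrArg Fin.val (huinj hab)
        simp only at h2
        exact Fin.ext (by omega)
      · exfalso; rw [hφ1 a ha0 hal, hφ2 b hb0 hbl] at hab; exact hUW _ _ hab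
      · exfalso; rw [hφ2 a ha0 hal, hφ1 b hb0 hbl] at hab; exact hUW _ _ hab.symm
      · rw [hφ2 a ha0 hal, hφ2 b hb0 hbl] at hab
        have h2 := congrArg Fin.val (hwinj hab)
        simp only at h2
        exact Fin.ext (by omega)
  refine ⟨Equiv.ofBijective φ (Finite.injective_iff_bijective.mp hinj), ?_⟩
  intro i j hcond
  have hi := i.2
  have hj := j.2
  show r (φ i) (φ j)
  rcases hcond with ⟨h01, h02⟩ | hB
  · have hij : i.1 < j.1 ∧ j.1 - i.1 ≤ P := by omega
    obtain ⟨hij1, hij2⟩ := hij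
    have hj0 : ¬ j.1 = 0 := by omega
    by_cases hi0 : i.1 = 0
    · have hjl : j.1 ≤ P := by omega
      rw [hφ0 i hi0, hφ1 j hj0 hjl]; exact hu _
    · by_cases hjl : j.1 ≤ P
      · have hil : i.1 ≤ P := by omega
        rw [hφ1 i hi0 hil, hφ1 j hj0 hjl]
        exact humono _ _ (Fin.mk_lt_mk.mpr (by omega))
      · by_cases hil : i.1 ≤ P
        · rw [hφ1 i hi0 hil, hφ2 j hj0 hjl]
          exact f5 _ _ (by simp only; omega)
        · rw [hφ2 i hi0 hil, hφ2 j hj0 hjl]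
          exact hwmono _ _ (Fin.mk_lt_mk.mpr (by omega))
  · have hB' : j.1 + Q + 1 ≤ i.1 := by omega
    have hil : ¬ i.1 ≤ P := by omega
    have hi0 : ¬ i.1 = 0 := by omega
    rw [hφ2 i hi0 hil]
    by_cases hj0 : j.1 = 0
    · rw [hφ0 j hj0]; exact hw _
    · have hjl : j.1 ≤ P := by omega
      rw [hφ1 j hj0 hjl]
      exact f6 _ _ (by simp only; omega)

theorem stmt12 (n : ℕ) (r : Fin n → Fin n → Prop) (hT : IsTournament r)
    (hdeg : ∀ v : Fin n, outDeg r v = (n - 1) / 2 ∨ outDeg r v = n / 2)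
    (h1 : ∀ s : Finset (Fin n), ¬ IsC3plus r s)
    (h2 : ∀ s : Finset (Fin n), ¬ IsC3minus r s) :
    IsCarousel n r := by
  rcases Nat.eq_zero_or_pos n with rfl | hn
  · exact ⟨Equiv.refl _, fun i => i.elim0⟩
  obtain ⟨hirr, hiff⟩ := hT
  have hne : ∀ a b : Fin n, r a b → a ≠ b := by
    intro a b hab h; subst h; exact hirr a hab
  have hasym : ∀ a b : Fin n, r a b → ¬ r b a := by
    intro a b hab hba
    exact (hiff a b (hne a b hab)).mp hab hba
  have htot : ∀ a b : Fin n, a ≠ b → r a b ∨ r b a := by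
    intro a b h
    by_cases hab : r a b
    · exact Or.inl hab
    · exact Or.inr ((hiff b a h.symm).mpr hab)
  have ltransO : ∀ x a b c : Fin n, r x a → r x b → r x c → r a b → r b c → r a c := by
    intro x a b c hxa hxb hxc hab hbc
    by_contra hac
    have hne' : a ≠ c := by rintro rfl; exact hasym _ _ hab hbc
    have hca : r c a := (htot a c hne').resolve_left hac
    exact h1 {x, a, b, c} ⟨x, a, b, c, hne x a hxa, hne x b hxb, hne x c hxc, by ext t; simp,
      hxa, hxb, hxc, hab, hbc, hca⟩
  have ltransI : ∀ x a b c : Fin n, r a x → r b x → r c x → r a b → r b c → r a c := by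
    intro x a b c hax hbx hcx hab hbc
    by_contra hac
    have hne' : a ≠ c := by rintro rfl; exact hasym _ _ hab hbc
    have hca : r c a := (htot a c hne').resolve_left hac
    exact h2 {x, a, b, c} ⟨x, a, b, c, (hne a x hax).symm, (hne b x hbx).symm,
      (hne c x hcx).symm, by ext t; simp, hax, hbx, hcx, hab, hbc, hca⟩
  have cross : ∀ x a y z : Fin n, r x a → r y x → r z x → r a y → r z y → r a z := by
    intro x a y z hxa hyx hzx hay hzy
    by_contra haz
    have hne' : a ≠ z := by rintro rfl; exact hasym _ _ hxa hzx
    have hza : r z a := (htot a z hne').resolve_left haz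
    exact h1 {z, x, a, y} ⟨z, x, a, y, hne z x hzx, hne z a hza, hne z y hzy, by ext t; simp,
      hzx, hza, hzy, hxa, hay, hyx⟩
  have hcardsplit : ∀ x : Fin n,
      (univ.filter (fun z => r x z)).card + (univ.filter (fun z => r z x)).card = n - 1 := by
    intro x
    have hdisj : Disjoint (univ.filter (fun z => r x z)) (univ.filter (fun z => r z x)) := by
      rw [Finset.disjoint_left]
      intro a ha hb
      rw [Finset.mem_filter] at ha hb
      exact hasym _ _ ha.2 hb.2
    have hunion : (univ.filter (fun z => r x z)) ∪ (univ.filter (fun z => r z x))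
        = univ.erase x := by
      ext a
      simp only [Finset.mem_union, Finset.mem_filter, Finset.mem_univ, true_and,
        Finset.mem_erase, and_true]
      constructor
      · rintro (h | h)
        · exact (hne x a h).symm
        · exact hne a x h
      · intro h
        exact htot x a (Ne.symm h)
    have hc := (Finset.card_union_of_disjoint hdisj).symm
    rw [hunion, Finset.card_erase_of_mem (Finset.mem_univ x), Finset.card_univ,
      Fintype.card_fin] at hc
    omega
  have houtDeg : ∀ x : Fin n, outDeg r x = (univ.filter (fun z => r x z)).card := fun _ => rfl
  have hswap : (∑ x : Fin n, (univ.filter (fun z => r x z)).card)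
      = ∑ x : Fin n, (univ.filter (fun z => r z x)).card := by
    simp only [Finset.card_filter]
    rw [Finset.sum_comm]
  have hsum : (∑ x : Fin n, (univ.filter (fun z => r x z)).card) * 2 = n * (n - 1) := by
    have h1' : ∑ x : Fin n, ((univ.filter (fun z => r x z)).card
        + (univ.filter (fun z => r z x)).card) = n * (n - 1) := by
      rw [Finset.sum_congr rfl (fun x _ => hcardsplit x)]
      simp [Finset.card_univ, mul_comm]
    rw [Finset.sum_add_distrib, ← hswap] at h1'
    omega
  have hex : ∃ x : Fin n, outDeg r x = (n - 1) / 2 := by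
    by_contra hno
    push_neg at hno
    have hall : ∀ x, outDeg r x = n / 2 := fun x => (hdeg x).resolve_left (hno x)
    have hev : n % 2 = 0 := by
      have ha := hno ⟨0, hn⟩
      have hb := hall ⟨0, hn⟩
      omega
    have hs2 : (∑ x : Fin n, (univ.filter (fun z => r x z)).card) = n * (n / 2) := by
      rw [Finset.sum_congr rfl (fun x _ => (houtDeg x).symm.trans (hall x))]
      simp [Finset.card_univ, mul_comm]
    rw [hs2] at hsum
    have h3 : n * (n / 2) * 2 = n * n := by
      rw [mul_assoc]
      congr 1
      omega
    rw [h3] at hsum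
    have := Nat.eq_of_mul_eq_mul_left hn hsum
    omega
  obtain ⟨v, hv⟩ := hex
  have hvO : (univ.filter (fun z => r v z)).card = (n - 1) / 2 := (houtDeg v).symm.trans hv
  have hPQ := hcardsplit v
  obtain ⟨u, huO, humono⟩ := enumTrans r (univ.filter (fun z => r v z)) hasym
    (fun a _ b _ h => htot a b h)
    (fun a ha b hb c hc hab hbc => ltransO v a b c
      (Finset.mem_filter.mp ha).2 (Finset.mem_filter.mp hb).2 (Finset.mem_filter.mp hc).2 hab hbc)
  obtain ⟨w, hwI, hwmono⟩ := enumTrans r (univ.filter (fun z => r z v)) hasym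
    (fun a _ b _ h => htot a b h)
    (fun a ha b hb c hc hab hbc => ltransI v a b c
      (Finset.mem_filter.mp ha).2 (Finset.mem_filter.mp hb).2 (Finset.mem_filter.mp hc).2 hab hbc)
  have hruv : ∀ i, r v (u i) := fun i => (Finset.mem_filter.mp (huO i)).2
  have hrwv : ∀ b, r (w b) v := fun b => (Finset.mem_filter.mp (hwI b)).2
  have huinj : Function.Injective u := by
    intro i j h
    rcases lt_trichotomy i j with hij | hij | hij
    · have hr := humono i j hij; rw [h] at hr; exact absurd hr (hirr _)
    · exact hij
    · have hr := humono j i hij; rw [h] at hr; exact absurd hr (hirr _)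
  have hwinj : Function.Injective w := by
    intro i j h
    rcases lt_trichotomy i j with hij | hij | hij
    · have hr := hwmono i j hij; rw [h] at hr; exact absurd hr (hirr _)
    · exact hij
    · have hr := hwmono j i hij; rw [h] at hr; exact absurd hr (hirr _)
  have husurj : ∀ a : Fin n, r v a → ∃ i, u i = a := by
    intro a ha
    have himg : Finset.image u Finset.univ = univ.filter (fun z => r v z) := by
      apply Finset.eq_of_subset_of_card_le
      · intro x hx
        obtain ⟨i, _, rfl⟩ := Finset.mem_image.mp hx
        exact huO i
      · rw [Finset.card_image_of_injective _ huinj, Finset.card_univ, Fintype.card_fin]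
    have ha' : a ∈ Finset.image u Finset.univ := by
      rw [himg]; exact Finset.mem_filter.mpr ⟨Finset.mem_univ a, ha⟩
    obtain ⟨i, _, rfl⟩ := Finset.mem_image.mp ha'
    exact ⟨i, rfl⟩
  have hwsurj : ∀ a : Fin n, r a v → ∃ b, w b = a := by
    intro a ha
    have himg : Finset.image w Finset.univ = univ.filter (fun z => r z v) := by
      apply Finset.eq_of_subset_of_card_le
      · intro x hx
        obtain ⟨b, _, rfl⟩ := Finset.mem_image.mp hx
        exact hwI b
      · rw [Finset.card_image_of_injective _ hwinj, Finset.card_univ, Fintype.card_fin]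
    have ha' : a ∈ Finset.image w Finset.univ := by
      rw [himg]; exact Finset.mem_filter.mpr ⟨Finset.mem_univ a, ha⟩
    obtain ⟨b, _, rfl⟩ := Finset.mem_image.mp ha'
    exact ⟨b, rfl⟩
  have key : ∀ i, (univ.filter (fun z => r (u i) z)).card
      = ((univ.filter (fun z => r v z)).card - 1 - i.1)
        + (univ.filter (fun b => r (u i) (w b))).card := by
    intro i
    have hsplit : univ.filter (fun z => r (u i) z)
        = ((univ.filter (fun z => r v z)).filter (fun z => r (u i) z))
          ∪ ((univ.filter (fun z => r z v)).filter (fun z => r (u i) z)) := by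
      ext a
      simp only [Finset.mem_filter, Finset.mem_union, Finset.mem_univ, true_and]
      constructor
      · intro h
        have hav : v ≠ a := by
          rintro rfl; exact hasym _ _ h (hruv i)
        rcases htot v a hav with h' | h'
        · exact Or.inl ⟨h', h⟩
        · exact Or.inr ⟨h', h⟩
      · rintro (⟨_, h⟩ | ⟨_, h⟩) <;> exact h
    have hdisj : Disjoint ((univ.filter (fun z => r v z)).filter (fun z => r (u i) z))
        ((univ.filter (fun z => r z v)).filter (fun z => r (u i) z)) := by
      rw [Finset.disjoint_left]
      intro a ha hb
      rw [Finset.mem_filter] at ha hb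
      exact hasym _ _ (Finset.mem_filter.mp ha.1).2 (Finset.mem_filter.mp hb.1).2
    rw [hsplit, Finset.card_union_of_disjoint hdisj]
    congr 1
    · have himg : (univ.filter (fun z => r v z)).filter (fun z => r (u i) z)
          = Finset.image u (Finset.Ioi i) := by
        ext a
        simp only [Finset.mem_filter, Finset.mem_image, Finset.mem_Ioi, Finset.mem_univ,
          true_and]
        constructor
        · rintro ⟨haO, hra⟩
          obtain ⟨j, rfl⟩ := husurj a haO
          refine ⟨j, ?_, rfl⟩
          rcases lt_trichotomy i j with h | h | h
          · exact h
          · exfalso; rw [h] at hra; exact hirr _ hra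
          · exact absurd hra (hasym _ _ (humono j i h))
        · rintro ⟨j, hij, rfl⟩
          exact ⟨hruv j, humono i j hij⟩
      rw [himg, Finset.card_image_of_injective _ huinj, Fin.card_Ioi]
    · have himg : (univ.filter (fun z => r z v)).filter (fun z => r (u i) z)
          = Finset.image w (univ.filter (fun b => r (u i) (w b))) := by
        ext a
        simp only [Finset.mem_filter, Finset.mem_image, Finset.mem_univ, true_and]
        constructor
        · rintro ⟨haI, hra⟩
          obtain ⟨b, rfl⟩ := hwsurj a haI
          exact ⟨b, hra, rfl⟩
        · rintro ⟨b, hb, rfl⟩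
          exact ⟨hrwv b, hb⟩
      rw [himg, Finset.card_image_of_injective _ hwinj]
  have hBbounds : ∀ i, i.1 + 1 ≤ (univ.filter (fun b => r (u i) (w b))).card
      ∧ (univ.filter (fun b => r (u i) (w b))).card
        ≤ i.1 + 1 + ((univ.filter (fun z => r z v)).card
            - (univ.filter (fun z => r v z)).card) := by
    intro i
    have hk := key i
    have hd := hdeg (u i)
    rw [houtDeg (u i)] at hd
    have hlt := i.isLt
    omega
  have hBclset : ∀ i, ∀ b b' : Fin (univ.filter (fun z => r z v)).card, b' ≤ b →
      b ∈ univ.filter (fun b => r (u i) (w b)) → b' ∈ univ.filter (fun b => r (u i) (w b)) := by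
    intro i b b' hle hb
    rw [Finset.mem_filter] at hb ⊢
    refine ⟨Finset.mem_univ _, ?_⟩
    rcases eq_or_lt_of_le hle with rfl | hlt
    · exact hb.2
    · exact cross v (u i) (w b) (w b') (hruv i) (hrwv b) (hrwv b') hb.2 (hwmono b' b hlt)
  have f5 : ∀ (i : Fin (univ.filter (fun z => r v z)).card)
      (b : Fin (univ.filter (fun z => r z v)).card), (b : ℕ) ≤ (i : ℕ) → r (u i) (w b) := by
    intro i b hbi
    have hmem := dcMem (univ.filter (fun b => r (u i) (w b))) (hBclset i) b
    have hlow := (hBbounds i).1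
    have hb := hmem.mpr (by omega)
    exact (Finset.mem_filter.mp hb).2
  have f6 : ∀ (i : Fin (univ.filter (fun z => r v z)).card)
      (b : Fin (univ.filter (fun z => r z v)).card),
      (i : ℕ) + 1 + ((univ.filter (fun z => r z v)).card
      - (univ.filter (fun z => r v z)).card) ≤ (b : ℕ) → r (w b) (u i) := by
    intro i b hbi
    have hmem := dcMem (univ.filter (fun b => r (u i) (w b))) (hBclset i) b
    have hhigh := (hBbounds i).2
    have hnb : b ∉ univ.filter (fun b => r (u i) (w b)) := by
      rw [hmem]; omega
    rw [Finset.mem_filter] at hnb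
    push_neg at hnb
    have hnr := hnb (Finset.mem_univ b)
    have hnequ : w b ≠ u i := by
      intro h
      have hh := hrwv b
      rw [h] at hh
      exact hasym _ _ (hruv i) hh
    exact (htot (w b) (u i) hnequ).resolve_right hnr
  refine buildCarousel n _ _ r (by omega) (by omega) v u w hruv hrwv humono hwmono f5 f6
    huinj hwinj ?_ ?_ ?_
  · intro i b h
    have hh := hruv i
    rw [h] at hh
    exact hasym _ _ hh (hrwv b)
  · intro i
    exact (hne v (u i) (hruv i)).symm
  · intro b
    exact hne (w b) v (hrwv b)
end

section
/- The function f(α) = (α(1−α)³ + (1/8)(1−α)⁴)/(1 − α⁴) on the interval (0,1) attains its maximum value (8 − 9·3^{1/3} + 3·9^{1/3})/8 at α = (2·9^{1/3} − 2 − 3^{1/3})/5. -/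
open Finset
open scoped Classical

set_option maxHeartbeats 1600000 in
theorem stmt14 :
    ∀ f : ℝ → ℝ, (∀ α : ℝ, f α = (α * (1 - α) ^ 3 + (1 / 8) * (1 - α) ^ 4) / (1 - α ^ 4)) →
    ∀ α₀ : ℝ, α₀ = (2 * (9 : ℝ) ^ ((1 : ℝ) / 3) - 2 - (3 : ℝ) ^ ((1 : ℝ) / 3)) / 5 →
      α₀ ∈ Set.Ioo (0 : ℝ) 1 ∧
      f α₀ = (8 - 9 * (3 : ℝ) ^ ((1 : ℝ) / 3) + 3 * (9 : ℝ) ^ ((1 : ℝ) / 3)) / 8 ∧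
      ∀ x ∈ Set.Ioo (0 : ℝ) 1, f x ≤ f α₀ := by
  intro f hf α₀ hα₀
  set c := (3 : ℝ) ^ ((1 : ℝ) / 3) with hc
  have hcpos : 0 < c := Real.rpow_pos_of_pos (by norm_num) _
  have hc3 : c ^ 3 = 3 := by
    rw [hc, ← Real.rpow_natCast ((3 : ℝ) ^ ((1 : ℝ) / 3)) 3,
      ← Real.rpow_mul (by norm_num : (0:ℝ) ≤ 3)]
    norm_num
  have h9 : (9 : ℝ) ^ ((1 : ℝ) / 3) = c ^ 2 := by
    have h9pos : (0:ℝ) < (9 : ℝ) ^ ((1 : ℝ) / 3) := Real.rpow_pos_of_pos (by norm_num) _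
    have h1 : ((9 : ℝ) ^ ((1 : ℝ) / 3)) ^ (3:ℕ) = 9 := by
      rw [← Real.rpow_natCast ((9 : ℝ) ^ ((1 : ℝ) / 3)) 3,
        ← Real.rpow_mul (by norm_num : (0:ℝ) ≤ 9)]
      norm_num
    have h2 : (c ^ 2) ^ (3:ℕ) = 9 := by nlinarith [hc3]
    have hb : (0:ℝ) < c ^ 2 := by positivity
    have hfac : ((9 : ℝ) ^ ((1 : ℝ) / 3) - c ^ 2) *
        (((9 : ℝ) ^ ((1 : ℝ) / 3)) ^ 2 + (9 : ℝ) ^ ((1 : ℝ) / 3) * c ^ 2 + (c ^ 2) ^ 2) = 0 := by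
      linear_combination h1 - h2
    have hpos2 : (0:ℝ) < ((9 : ℝ) ^ ((1 : ℝ) / 3)) ^ 2 + (9 : ℝ) ^ ((1 : ℝ) / 3) * c ^ 2 +
        (c ^ 2) ^ 2 := by positivity
    rcases mul_eq_zero.mp hfac with h | h
    · linarith
    · linarith
  have hcl : (1.442 : ℝ) < c := by
    nlinarith [hc3, hcpos, sq_nonneg (c - 1.442), sq_nonneg (c + 1.442)]
  have hcu : c < (1.4423 : ℝ) := by
    nlinarith [hc3, hcpos, sq_nonneg (c - 1.4423), sq_nonneg (c + 1.4423)]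
  have hprod : (0:ℝ) < (c - 1.442) * (1.4423 - c) :=
    mul_pos (by linarith) (by linarith)
  rw [h9] at hα₀
  have key : ∀ x : ℝ,
      8 * (((8 - 9*c + 3*c^2)/8) * (1 - x^4) - (x*(1-x)^3 + (1/8)*(1-x)^4)) =
      (-1 + 9*c - 3*c^2) * (1 - x) * (x - (2*c^2 - 2 - c)/5)^2 * ((13 + 14*c + 2*c^2)/17 - x) := by
    intro x
    linear_combination ((-1009/425) + (279/85)*c + (-144/425)*c^2 + (-478/425)*c^3
      + (72/425)*c^4 + (24/425)*c^5 + (104/85)*x + (342/425)*x*c + (108/85)*x*c^2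
      + (154/425)*x*c^3 + (-72/425)*x*c^4 + (-24/425)*x*c^5 + (-2481/425)*x^2
      + (-567/425)*x^2*c + (-396/425)*x^2*c^2 + (324/425)*x^2*c^3 + (594/85)*x^3
      + (-234/85)*x^3*c : ℝ) * hc3
  have hA : (0:ℝ) < -1 + 9*c - 3*c^2 := by nlinarith [hprod]
  have h0 : (0:ℝ) < α₀ := by rw [hα₀]; nlinarith [hprod]
  have h1 : α₀ < 1 := by rw [hα₀]; nlinarith [hprod]
  have hD0 : (0:ℝ) < 1 - α₀ ^ 4 := by
    have := pow_lt_one₀ (le_of_lt h0) h1 (by norm_num : (4:ℕ) ≠ 0)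
    linarith
  have hval : f α₀ = (8 - 9 * c + 3 * (9 : ℝ) ^ ((1 : ℝ) / 3)) / 8 := by
    rw [h9, hf α₀, div_eq_iff (ne_of_gt hD0)]
    have hkey := key α₀
    rw [hα₀] at hkey ⊢
    linear_combination (-1/8 : ℝ) * hkey
  refine ⟨⟨h0, h1⟩, hval, ?_⟩
  intro x hx
  obtain ⟨hx0, hx1⟩ := hx
  have hDx : (0:ℝ) < 1 - x ^ 4 := by
    have := pow_lt_one₀ (le_of_lt hx0) hx1 (by norm_num : (4:ℕ) ≠ 0)
    linarith
  rw [hval, h9, hf x, div_le_iff₀ hDx]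
  have hk := key x
  have hbx : (0:ℝ) ≤ (13 + 14*c + 2*c^2)/17 - x := by nlinarith [sq_nonneg c]
  have hP : (0:ℝ) ≤ (-1 + 9*c - 3*c^2) * (1 - x) * (x - (2*c^2 - 2 - c)/5)^2 *
      ((13 + 14*c + 2*c^2)/17 - x) :=
    mul_nonneg (mul_nonneg (mul_nonneg (le_of_lt hA) (by linarith))
      (sq_nonneg _)) hbx
  linarith [hk, hP]
end

section
/- For odd k ≥ 5 and n > k: let C_n be the carousel tournament on vertices v₁,...,v_n with v_i → v_j iff (j − i) mod n ∈ {1, ..., (n−1)/2} (n odd). If X ⊆ V(C_n) is a set of k vertices with C_n[X] ≅ C_k, then for every vertex v ∉ X, the induced subtournament C_n[X ∪ {v}] is isomorphic to C_{k+1}. -/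
open Finset
open scoped Classical

/-- The carousel relation on `Fin m` for odd `m`: `i → j` iff `(j - i) mod m ∈ {1, …, (m-1)/2}`. -/
def oddCarousel (m : ℕ) (i j : Fin m) : Prop :=
  ((j : ℕ) + m - (i : ℕ)) % m ∈ Finset.Icc 1 ((m - 1) / 2)

/-- The carousel tournament `C_m`: for odd `m` it is `oddCarousel m`; for even `m` it is
obtained from `C_{m+1}` by deleting the last vertex. -/
def carouselRel (m : ℕ) (i j : Fin m) : Prop :=
  if Odd m then oddCarousel m i j else oddCarousel (m + 1) i.castSucc j.castSucc

/-- The subtournament of `R` induced on `s` is isomorphic to `(Fin m, S)`. -/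
def InducedIso {n m : ℕ} (R : Fin n → Fin n → Prop) (s : Finset (Fin n))
    (S : Fin m → Fin m → Prop) : Prop :=
  ∃ e : {x // x ∈ s} ≃ Fin m, ∀ a b : {x // x ∈ s}, R a.1 b.1 ↔ S (e a) (e b)

def nbeat (h s t : ℕ) : Prop := (s < t ∧ t ≤ s + h) ∨ (t + h < s)

instance nbeat.dec : ∀ h s t, Decidable (nbeat h s t) := fun _ _ _ => by
  unfold nbeat; infer_instance

lemma mod_helper (n a b : ℕ) (ha : a < n) (hb : b < n) :
    (a + n - b) % n = if b ≤ a then a - b else a + n - b := by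
  rcases le_or_gt b a with hba | hba
  · rw [if_pos hba]
    have h1 : a + n - b = n + (a - b) := by omega
    rw [h1, Nat.add_mod_left, Nat.mod_eq_of_lt (by omega)]
  · rw [if_neg (by omega), Nat.mod_eq_of_lt (by omega)]

/-- The rotated coordinate placing `vv` at position `h`. -/
def keyF (n h vv x : ℕ) : ℕ :=
  if x + (h + (n - vv)) < n then x + (h + (n - vv))
  else if x + (h + (n - vv)) < 2*n then x + (h + (n - vv)) - n
  else x + (h + (n - vv)) - 2*n

lemma keyF_lt (n h vv x : ℕ) (hn : n = 2*h+1) (hx : x < n) (hv : vv < n) :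
    keyF n h vv x < n := by unfold keyF; split_ifs <;> omega

lemma keyF_v (n h vv : ℕ) (hn : n = 2*h+1) (hv : vv < n) : keyF n h vv vv = h := by
  unfold keyF; split_ifs <;> omega

lemma keyF_inj (n h vv x y : ℕ) (hn : n = 2*h+1) (hx : x < n) (hy : y < n) (hv : vv < n) :
    keyF n h vv x = keyF n h vv y → x = y := by
  unfold keyF; split_ifs <;> omega

lemma beat_key (n h vv x y : ℕ) (hn : n = 2*h+1) (hx : x < n) (hy : y < n) (hv : vv < n) :
    ((y + n - x) % n ∈ Finset.Icc 1 ((n-1)/2)) ↔ nbeat h (keyF n h vv x) (keyF n h vv y) := by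
  rw [Finset.mem_Icc, mod_helper n y x hy hx]
  unfold keyF nbeat
  split_ifs <;> omega

/-- regularity of odd carousel -/
lemma reg_oddCarousel (k q : ℕ) (hkq : k = 2*q+1) (i : Fin k) :
    (univ.filter (fun j => oddCarousel k i j)).card = q := by
  have hq : (k-1)/2 = q := by omega
  have hk0 : 0 < k := by omega
  have : (univ.filter (fun j => oddCarousel k i j)).card = (Finset.Icc 1 q).card := by
    apply Finset.card_nbij (fun j : Fin k => ((j : ℕ) + k - (i : ℕ)) % k)
    · intro a ha
      simp only [mem_filter, mem_univ, true_and, oddCarousel, hq] at ha ⊢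
      simpa using ha
    · intro a ha b hb hab
      simp only [Set.mem_setOf_eq] at *
      rw [mod_helper k _ _ a.2 i.2, mod_helper k _ _ b.2 i.2] at hab
      have := a.2; have := b.2; have := i.2
      apply Fin.ext
      split_ifs at hab <;> omega
    · intro r hr
      simp only [coe_filter, mem_univ, true_and, Set.mem_image, Set.mem_setOf_eq,
        Finset.mem_coe, Finset.mem_Icc] at hr ⊢
      have hi2 := i.2
      rcases lt_or_ge ((i:ℕ) + r) k with hc | hc
      · refine ⟨⟨(i:ℕ) + r, hc⟩, ?_, ?_⟩
        · show oddCarousel k i _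
          unfold oddCarousel
          simp only [Finset.mem_Icc, Fin.val_mk]
          rw [mod_helper k _ _ hc i.2]
          split_ifs <;> omega
        · simp only [Fin.val_mk]
          rw [mod_helper k _ _ hc i.2]
          split_ifs <;> omega
      · refine ⟨⟨(i:ℕ) + r - k, by omega⟩, ?_, ?_⟩
        · show oddCarousel k i _
          unfold oddCarousel
          simp only [Finset.mem_Icc, Fin.val_mk]
          rw [mod_helper k _ _ (by omega : (i:ℕ) + r - k < k) i.2]
          split_ifs <;> omega
        · simp only [Fin.val_mk]
          rw [mod_helper k _ _ (by omega : (i:ℕ) + r - k < k) i.2]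
          split_ifs <;> omega
  rw [this, Nat.card_Icc]; omega

lemma core (k q h : ℕ) (hkq : k = 2*q+1) (hq : 2 ≤ q) (f : Fin (k+1) → ℕ)
    (hmono : StrictMono f) (hub : ∀ i, f i ≤ 2*h) (b : Fin (k+1)) (hfb : f b = h)
    (hdeg : ∀ i, i ≠ b → (univ.filter (fun j => j ≠ b ∧ nbeat h (f i) (f j))).card = q) :
    ∀ i j : Fin (k+1), nbeat h (f i) (f j) ↔
      (((j:ℕ) + (k+2) - (i:ℕ)) % (k+2) ∈ Finset.Icc 1 (q+1)) := by
  have hfval : ∀ j : Fin (k+1), j ≠ b → (f j < h ↔ j < b) := by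
    intro j hj
    constructor
    · intro hlt
      by_contra hnb
      have hbj : b < j := lt_of_le_of_ne (not_lt.mp hnb) (Ne.symm hj)
      have := hmono hbj
      omega
    · intro hlt; have := hmono hlt; omega
  have hfne : ∀ j : Fin (k+1), j ≠ b → f j ≠ h := by
    intro j hj heq
    exact hj (hmono.injective (heq.trans hfb.symm))
  have beat_to_b : ∀ j : Fin (k+1), j ≠ b → (nbeat h (f j) (f b) ↔ j < b) := by
    intro j hj
    rw [hfb, ← hfval j hj]
    have h1 := hfne j hj
    have h2 := hub j
    unfold nbeat
    constructor
    · intro hb'; omega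
    · intro hb'; omega
  have beat_from_b : ∀ j : Fin (k+1), nbeat h (f b) (f j) ↔ b < j := by
    intro j
    rcases eq_or_ne j b with rfl | hj
    · simp only [lt_self_iff_false, iff_false]; unfold nbeat; omega
    · have h1 := hfne j hj
      have h2 := hub j
      have h3 := hfval j hj
      rw [hfb]
      have h4 : (b < j) ↔ ¬ (j < b) := by
        constructor
        · exact fun hc => not_lt.mpr hc.le
        · intro hc; exact lt_of_le_of_ne (not_lt.mp hc) hj.symm
      rw [h4, ← h3]
      unfold nbeat
      constructor
      · intro hb'; omega
      · intro hb'; omega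
  have o_eq : ∀ i : Fin (k+1), i ≠ b →
      (univ.filter (fun j => nbeat h (f i) (f j))).card = q + (if i < b then 1 else 0) := by
    intro i hi
    have hsplit : (univ.filter (fun j => nbeat h (f i) (f j)))
        = (univ.filter (fun j => j ≠ b ∧ nbeat h (f i) (f j))) ∪
          (univ.filter (fun j => j = b ∧ nbeat h (f i) (f j))) := by
      ext j
      simp only [mem_filter, mem_univ, true_and, mem_union]
      constructor
      · intro hb'
        by_cases hc : j = b
        · exact Or.inr ⟨hc, hb'⟩
        · exact Or.inl ⟨hc, hb'⟩
      · rintro (⟨_, hb'⟩ | ⟨_, hb'⟩) <;> exact hb'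
    have hdisj : Disjoint (univ.filter (fun j => j ≠ b ∧ nbeat h (f i) (f j)))
        (univ.filter (fun j => j = b ∧ nbeat h (f i) (f j))) := by
      rw [Finset.disjoint_left]
      intro a ha hb'
      simp only [mem_filter] at ha hb'
      exact ha.2.1 hb'.2.1
    rw [hsplit, card_union_of_disjoint hdisj, hdeg i hi]
    congr 1
    rcases lt_or_ge i b with hib | hib
    · rw [if_pos hib]
      have he : (univ.filter (fun j => j = b ∧ nbeat h (f i) (f j))) = {b} := by
        ext j
        simp only [mem_filter, mem_univ, true_and, mem_singleton]
        constructor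
        · exact fun hp => hp.1
        · rintro rfl; exact ⟨rfl, (beat_to_b i hi).mpr hib⟩
      rw [he, card_singleton]
    · rw [if_neg (not_lt.mpr hib)]
      have he : (univ.filter (fun j => j = b ∧ nbeat h (f i) (f j))) = ∅ := by
        ext j
        simp only [mem_filter, mem_univ, true_and, notMem_empty, iff_false, not_and]
        rintro rfl hb'
        exact absurd ((beat_to_b i hi).mp hb') (not_lt.mpr hib)
      rw [he, card_empty]
  have o_b : (univ.filter (fun j => nbeat h (f b) (f j))).card = k - (b:ℕ) := by
    have he : (univ.filter (fun j => nbeat h (f b) (f j))) = Ioi b := by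
      ext j
      simp only [mem_filter, mem_univ, true_and, mem_Ioi]
      exact beat_from_b j
    rw [he, Fin.card_Ioi]
    omega
  -- roundness
  have roundA : ∀ i j : Fin (k+1), i < j → (nbeat h (f i) (f j) ↔
      (j:ℕ) - (i:ℕ) ≤ (univ.filter (fun l => nbeat h (f i) (f l))).card) := by
    intro i j hij
    have hfij := hmono hij
    constructor
    · intro hb
      have hsub : Ioc i j ⊆ univ.filter (fun l => nbeat h (f i) (f l)) := by
        intro l hl
        rw [mem_Ioc] at hl
        simp only [mem_filter, mem_univ, true_and]
        have h1 := hmono hl.1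
        have h2 : f l ≤ f j := hmono.monotone hl.2
        unfold nbeat at hb ⊢
        omega
      have hc := Finset.card_le_card hsub
      rw [Fin.card_Ioc] at hc
      exact hc
    · intro hle
      by_contra hnb
      have hgap : f i + h < f j := by unfold nbeat at hnb; omega
      have hsub : univ.filter (fun l => nbeat h (f i) (f l)) ⊆ Ioo i j := by
        intro l hl
        simp only [mem_filter, mem_univ, true_and] at hl
        rw [mem_Ioo]
        have hub_l := hub l
        have hub_j := hub j
        rcases hl with ⟨h1, h2⟩ | h3
        · have hlj : f l < f j := by omega
          exact ⟨hmono.lt_iff_lt.mp h1, hmono.lt_iff_lt.mp hlj⟩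
        · omega
      have hc := Finset.card_le_card hsub
      rw [Fin.card_Ioo] at hc
      omega
  have roundB : ∀ i j : Fin (k+1), j < i → (nbeat h (f i) (f j) ↔
      (k+1) + (j:ℕ) ≤ (univ.filter (fun l => nbeat h (f i) (f l))).card + (i:ℕ)) := by
    intro i j hji
    have hfji := hmono hji
    have hi_le : (i:ℕ) ≤ k := by have := i.2; omega
    constructor
    · intro hb
      have hwrap : f j + h < f i := by unfold nbeat at hb; omega
      have hsub : Iic j ∪ Ioi i ⊆ univ.filter (fun l => nbeat h (f i) (f l)) := by
        intro l hl
        simp only [mem_union, mem_Iic, mem_Ioi] at hl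
        simp only [mem_filter, mem_univ, true_and]
        rcases hl with hl | hl
        · have hfl : f l ≤ f j := hmono.monotone hl
          unfold nbeat; omega
        · have h1 := hmono hl
          have h2 := hub l
          unfold nbeat; omega
      have hdisj : Disjoint (Iic j) (Ioi i) := by
        rw [Finset.disjoint_left]
        intro a ha hb'
        rw [mem_Iic] at ha; rw [mem_Ioi] at hb'
        exact absurd (lt_of_le_of_lt ha (lt_trans hji hb')) (lt_irrefl a)
      have hcard := Finset.card_le_card hsub
      rw [card_union_of_disjoint hdisj, Fin.card_Iic, Fin.card_Ioi] at hcard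
      omega
    · intro hle
      by_contra hnb
      have hle2 : f i ≤ f j + h := by unfold nbeat at hnb; omega
      have hsub : univ.filter (fun l => nbeat h (f i) (f l)) ⊆ Iio j ∪ Ioi i := by
        intro l hl
        simp only [mem_filter, mem_univ, true_and] at hl
        simp only [mem_union, mem_Iio, mem_Ioi]
        rcases hl with ⟨h1, h2⟩ | h3
        · exact Or.inr (hmono.lt_iff_lt.mp h1)
        · left
          have hfl : f l < f j := by omega
          exact hmono.lt_iff_lt.mp hfl
      have hdisj : Disjoint (Iio j) (Ioi i) := by
        rw [Finset.disjoint_left]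
        intro a ha hb'
        rw [mem_Iio] at ha; rw [mem_Ioi] at hb'
        exact absurd (lt_trans (lt_trans ha hji) hb') (lt_irrefl a)
      have hcard := Finset.card_le_card hsub
      rw [card_union_of_disjoint hdisj, Fin.card_Iio, Fin.card_Ioi] at hcard
      omega
  -- bounds on b
  have hble : (b:ℕ) ≤ q + 1 := by
    rcases eq_or_ne (0 : Fin (k+1)) b with h0 | h0
    · rw [← h0]; simp only [Fin.val_zero]; omega
    · have hlt : (0 : Fin (k+1)) < b := lt_of_le_of_ne (Fin.zero_le b) h0
      have hbeat : nbeat h (f 0) (f b) := (beat_to_b 0 h0).mpr hlt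
      have hr := (roundA 0 b hlt).mp hbeat
      rw [o_eq 0 h0, if_pos hlt] at hr
      simpa using hr
  have hbge : q ≤ (b:ℕ) := by
    rcases eq_or_ne b (Fin.last k) with hbl | hbl
    · rw [hbl, Fin.val_last]; omega
    · have hlt : b < Fin.last k := lt_of_le_of_ne (Fin.le_last b) hbl
      have hne : (Fin.last k) ≠ b := ne_of_gt hlt
      have hnbeat : ¬ nbeat h (f (Fin.last k)) (f b) := by
        rw [beat_to_b _ hne]
        exact not_lt.mpr hlt.le
      have hr := (roundB (Fin.last k) b hlt).not.mp hnbeat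
      rw [o_eq _ hne, if_neg (not_lt.mpr hlt.le)] at hr
      simp only [Fin.val_last] at hr
      omega
  -- conclusion
  intro i j
  have hiv : (i:ℕ) < k + 1 := i.2
  have hjv : (j:ℕ) < k + 1 := j.2
  have hmod : (((j:ℕ) + (k+2) - (i:ℕ)) % (k+2) ∈ Finset.Icc 1 (q+1)) ↔
      (if (i:ℕ) ≤ (j:ℕ) then 1 ≤ (j:ℕ) - (i:ℕ) ∧ (j:ℕ) - (i:ℕ) ≤ q + 1
       else (j:ℕ) + (k+2) - (i:ℕ) ≤ q + 1) := by
    rw [mod_helper (k+2) _ _ (by omega) (by omega), Finset.mem_Icc]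
    split_ifs with hij
    · tauto
    · constructor
      · exact fun hp => hp.2
      · intro hp; exact ⟨by omega, hp⟩
  rw [hmod]
  rcases lt_trichotomy i j with hij | hij | hij
  · rw [roundA i j hij]
    have hijv : (i:ℕ) < (j:ℕ) := hij
    rw [if_pos (le_of_lt hijv)]
    rcases lt_trichotomy i b with hib | hib | hib
    · have ho := o_eq i (ne_of_lt hib)
      rw [ho, if_pos hib]
      have hibv : (i:ℕ) < (b:ℕ) := hib
      omega
    · rw [hib, o_b]
      have : (i:ℕ) = (b:ℕ) := by rw [hib]
      omega
    · have ho := o_eq i (ne_of_gt hib)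
      rw [ho, if_neg (not_lt.mpr hib.le)]
      have hibv : (b:ℕ) < (i:ℕ) := hib
      omega
  · subst hij
    rw [if_pos le_rfl]
    constructor
    · intro hb'; unfold nbeat at hb'; omega
    · intro hp; omega
  · rw [roundB i j hij]
    have hijv : (j:ℕ) < (i:ℕ) := hij
    rw [if_neg (not_le.mpr hijv)]
    rcases lt_trichotomy i b with hib | hib | hib
    · have ho := o_eq i (ne_of_lt hib)
      rw [ho, if_pos hib]
      have hibv : (i:ℕ) < (b:ℕ) := hib
      omega
    · rw [hib, o_b]
      have heq : (i:ℕ) = (b:ℕ) := by rw [hib]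
      omega
    · have ho := o_eq i (ne_of_gt hib)
      rw [ho, if_neg (not_lt.mpr hib.le)]
      have hibv : (b:ℕ) < (i:ℕ) := hib
      omega


theorem stmt19 (k n : ℕ) (hk : Odd k) (hk5 : 5 ≤ k) (hn : Odd n) (hkn : k < n)
    (X : Finset (Fin n)) (hX : X.card = k)
    (hiso : InducedIso (oddCarousel n) X (oddCarousel k)) :
    ∀ v : Fin n, v ∉ X →
      InducedIso (oddCarousel n) (insert v X) (carouselRel (k + 1)) := by
  intro v hv
  obtain ⟨q, hkq⟩ : ∃ q, k = 2*q+1 := by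
    rcases hk with ⟨q, hq⟩; exact ⟨q, by omega⟩
  obtain ⟨h, hnh⟩ : ∃ h, n = 2*h+1 := by
    rcases hn with ⟨h, hh⟩; exact ⟨h, by omega⟩
  have hq2 : 2 ≤ q := by omega
  have hn0 : 0 < n := by omega
  -- the key coordinate
  have hbk : ∀ x y : Fin n, oddCarousel n x y ↔
      nbeat h (keyF n h (v:ℕ) (x:ℕ)) (keyF n h (v:ℕ) (y:ℕ)) := by
    intro x y
    exact beat_key n h (v:ℕ) (x:ℕ) (y:ℕ) hnh x.2 y.2 v.2
  have hkinj : ∀ x y : Fin n, keyF n h (v:ℕ) (x:ℕ) = keyF n h (v:ℕ) (y:ℕ) → x = y := by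
    intro x y hxy
    exact Fin.ext (keyF_inj n h (v:ℕ) (x:ℕ) (y:ℕ) hnh x.2 y.2 v.2 hxy)
  have hkv : keyF n h (v:ℕ) (v:ℕ) = h := keyF_v n h (v:ℕ) hnh v.2
  -- the image finset
  have hS : (insert v X).card = k + 1 := by rw [card_insert_of_notMem hv, hX]
  have hTcard : ((insert v X).image (fun x : Fin n => keyF n h v.val x.val)).card = k + 1 := by
    rw [Finset.card_image_of_injOn, hS]
    intro x _ y _ hxy
    exact hkinj x y hxy
  have hhT : h ∈ (insert v X).image (fun x : Fin n => keyF n h v.val x.val) :=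
    mem_image.mpr ⟨v, mem_insert_self _ _, hkv⟩
  set T := (insert v X).image (fun x : Fin n => keyF n h v.val x.val) with hTdef
  -- the sorted enumeration
  set g := T.orderIsoOfFin hTcard with hgdef
  set f : Fin (k+1) → ℕ := fun i => ((g i : {x // x ∈ T}) : ℕ) with hfdef
  have hmono : StrictMono f := by
    intro a c hac
    exact Subtype.coe_lt_coe.mpr (g.strictMono hac)
  have hub : ∀ i, f i ≤ 2*h := by
    intro i
    have hmem : (f i) ∈ T := (g i).2
    rw [hTdef] at hmem
    obtain ⟨x, _, hx⟩ := mem_image.mp hmem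
    rw [← hx]
    have := keyF_lt n h (v:ℕ) (x:ℕ) hnh x.2 v.2
    omega
  set b := g.symm ⟨h, hhT⟩ with hbdef
  have hfb : f b = h := by
    rw [hfdef, hbdef]
    simp only [OrderIso.apply_symm_apply]
  -- the equivalence
  have hcards : Fintype.card {x // x ∈ insert v X} = Fintype.card (Fin (k+1)) := by
    rw [Fintype.card_coe, hS, Fintype.card_fin]
  have hto_inj : Function.Injective
      (fun x : {x // x ∈ insert v X} =>
        g.symm ⟨keyF n h (v:ℕ) ((x:Fin n):ℕ), mem_image_of_mem _ x.2⟩) := by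
    intro x y hxy
    have h1 : (⟨keyF n h (v:ℕ) ((x:Fin n):ℕ), mem_image_of_mem _ x.2⟩ : {z // z ∈ T})
        = ⟨keyF n h (v:ℕ) ((y:Fin n):ℕ), mem_image_of_mem _ y.2⟩ := g.symm.injective hxy
    have h2 : keyF n h (v:ℕ) ((x:Fin n):ℕ) = keyF n h (v:ℕ) ((y:Fin n):ℕ) :=
      congrArg Subtype.val h1
    exact Subtype.ext (hkinj _ _ h2)
  set e : {x // x ∈ insert v X} ≃ Fin (k+1) :=
    Equiv.ofBijective _ ((Fintype.bijective_iff_injective_and_card _).mpr ⟨hto_inj, hcards⟩)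
    with hedef
  have hfe : ∀ x : {x // x ∈ insert v X}, f (e x) = keyF n h (v:ℕ) ((x:Fin n):ℕ) := by
    intro x
    rw [hedef]
    show f (g.symm ⟨keyF n h (v:ℕ) ((x:Fin n):ℕ), mem_image_of_mem _ x.2⟩) = _
    rw [hfdef]
    simp only [OrderIso.apply_symm_apply]
  -- regularity of X
  obtain ⟨e', he'⟩ := hiso
  have hreg : ∀ x, ∀ hx : x ∈ X, (X.filter (fun y => oddCarousel n x y)).card = q := by
    intro x hx
    have h1 : (X.filter (fun y => oddCarousel n x y)).card
        = (univ.filter (fun j : Fin k => oddCarousel k (e' ⟨x,hx⟩) j)).card := by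
      apply card_bij (fun y hy => e' ⟨y, (mem_filter.mp hy).1⟩)
      · intro y hy
        simp only [mem_filter, mem_univ, true_and]
        exact (he' ⟨x,hx⟩ ⟨y, (mem_filter.mp hy).1⟩).mp (mem_filter.mp hy).2
      · intro y1 hy1 y2 hy2 hee
        have := e'.injective hee
        exact Subtype.mk_eq_mk.mp this
      · intro j hj
        refine ⟨(e'.symm j).1, mem_filter.mpr ⟨(e'.symm j).2, ?_⟩, ?_⟩
        · rw [he' ⟨x,hx⟩ ⟨(e'.symm j).1, (e'.symm j).2⟩]
          have hj' : oddCarousel k (e' ⟨x, hx⟩) j := (mem_filter.mp hj).2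
          have heta : (⟨(e'.symm j).1, (e'.symm j).2⟩ : {z // z ∈ X}) = e'.symm j := rfl
          rw [heta, e'.apply_symm_apply]
          exact hj'
        · have heta : (⟨(e'.symm j).1, (e'.symm j).2⟩ : {z // z ∈ X}) = e'.symm j := rfl
          rw [heta, e'.apply_symm_apply]
    rw [h1, reg_oddCarousel k q hkq]
  -- transfer degrees
  have hdeg : ∀ i, i ≠ b → (univ.filter (fun j => j ≠ b ∧ nbeat h (f i) (f j))).card = q := by
    intro i hib
    have hfiT : f i ∈ T := (g i).2
    rw [hTdef] at hfiT
    obtain ⟨x, hxS, hxk⟩ := mem_image.mp hfiT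
    have hxv : x ≠ v := by
      rintro rfl
      apply hib
      apply hmono.injective
      rw [hfb, ← hxk, hkv]
    have hxX : x ∈ X := by
      rcases mem_insert.mp hxS with hc | hc
      · exact absurd hc hxv
      · exact hc
    rw [← hreg x hxX]
    symm
    apply card_bij (fun y hy => e ⟨y, mem_insert_of_mem (mem_filter.mp hy).1⟩)
    · intro y hy
      have hyX := (mem_filter.mp hy).1
      have hyv : y ≠ v := fun hc => hv (hc ▸ hyX)
      simp only [mem_filter, mem_univ, true_and]
      constructor
      · intro hc
        apply hyv
        have h2 : f (e ⟨y, mem_insert_of_mem hyX⟩) = f b := by rw [hc]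
        rw [hfe, hfb] at h2
        have h2' : keyF n h v.val y.val = keyF n h v.val v.val := by rw [hkv]; exact h2
        exact hkinj y v h2'
      · rw [hfe, ← hxk]
        exact (hbk x y).mp (mem_filter.mp hy).2
    · intro y1 hy1 y2 hy2 hee
      have := e.injective hee
      exact Subtype.mk_eq_mk.mp this
    · intro j hj
      simp only [mem_filter, mem_univ, true_and] at hj
      obtain ⟨hj1, hj2⟩ := hj
      have hez : e (e.symm j) = j := e.apply_symm_apply j
      have hfj : f j = keyF n h (v:ℕ) (((e.symm j : {x // x ∈ insert v X}) : Fin n):ℕ) := by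
        have hh := hfe (e.symm j)
        rw [hez] at hh
        exact hh
      have hzv : ((e.symm j : {x // x ∈ insert v X}) : Fin n) ≠ v := by
        intro hc
        apply hj1
        apply hmono.injective
        rw [hfb, hfj, hc, hkv]
      have hzX : ((e.symm j : {x // x ∈ insert v X}) : Fin n) ∈ X := by
        rcases mem_insert.mp (e.symm j).2 with hc | hc
        · exact absurd hc hzv
        · exact hc
      refine ⟨((e.symm j : {x // x ∈ insert v X}) : Fin n), mem_filter.mpr ⟨hzX, ?_⟩, ?_⟩
      · rw [hbk x _, hxk, ← hfj]
        exact hj2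
      · have heta : (⟨((e.symm j : {x // x ∈ insert v X}) : Fin n), mem_insert_of_mem hzX⟩ :
            {x // x ∈ insert v X}) = e.symm j := Subtype.ext rfl
        rw [heta, hez]
  -- conclusion
  have hcore := core k q h hkq hq2 f hmono hub b hfb hdeg
  refine ⟨e, ?_⟩
  intro a c
  rw [hbk a.1 c.1]
  have h1 : keyF n h (v:ℕ) ((a : {x // x ∈ insert v X}) : Fin n) = f (e a) := (hfe a).symm
  have h2 : keyF n h (v:ℕ) ((c : {x // x ∈ insert v X}) : Fin n) = f (e c) := (hfe c).symm
  rw [h1, h2, hcore (e a) (e c)]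
  unfold carouselRel
  rw [if_neg (show ¬ Odd (k+1) by rintro ⟨r, hr⟩; omega)]
  unfold oddCarousel
  simp only [Fin.coe_castSucc]
  have h3 : k + 1 + 1 = k + 2 := by omega
  have h4 : (k + 1 + 1 - 1) / 2 = q + 1 := by omega
  rw [h3, h4]
end
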